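/- arXiv:2110.11687 — 5 statements merged into one kernel-verified Lean document; each statement's English description precedes it below -/
import Mathlib

section
/- The inverse function m is differentiable on the open interval (g(Δ₁), g(Δ₂)), and for every t in this interval its derivative is m′(t) = y^{1−c} / ( (c·tan(log y) + θ·sec²(log y)) · (tan(log y))^{θ−1} ), where y = m(t) and sec = 1/cos. -/
open Real

/-- `Δ₁ = exp(π·⌊(log x)/π⌋ + arctan 1)` -/
noncomputable def Δ₁ (x : ℝ) : ℝ :=
  Real.exp (Real.pi * (⌊Real.log x / Real.pi⌋ : ℝ) + Real.arctan 1)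

/-- `Δ₂ = exp(π·⌊(log x)/π⌋ + arctan 2)` -/
noncomputable def Δ₂ (x : ℝ) : ℝ :=
  Real.exp (Real.pi * (⌊Real.log x / Real.pi⌋ : ℝ) + Real.arctan 2)

/-- `g(y) = y^c · (tan(log y))^θ` (real powers). -/
noncomputable def g (c θ y : ℝ) : ℝ := y ^ c * Real.tan (Real.log y) ^ θ

lemma tan_log_mem_Icc {x y : ℝ} (hy : y ∈ Set.Icc (Δ₁ x) (Δ₂ x)) :
    Real.tan (Real.log y) ∈ Set.Icc (1 : ℝ) 2 := by
  set k : ℤ := ⌊Real.log x / Real.pi⌋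
  have hy0 : (0 : ℝ) < y := lt_of_lt_of_le (Real.exp_pos _) hy.1
  have hlog1 : Real.pi * (k : ℝ) + Real.arctan 1 ≤ Real.log y := by
    have := Real.log_le_log (Real.exp_pos _) hy.1
    simpa only [Δ₁, Real.log_exp] using this
  have hlog2 : Real.log y ≤ Real.pi * (k : ℝ) + Real.arctan 2 := by
    have := Real.log_le_log hy0 hy.2
    simpa only [Δ₂, Real.log_exp] using this
  set a : ℝ := Real.log y - Real.pi * (k : ℝ) with ha
  have htan : Real.tan (Real.log y) = Real.tan a := by
    rw [ha]
    have := Real.tan_add_int_mul_pi (Real.log y - Real.pi * (k : ℝ)) k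
    rw [← this]; ring_nf
  have ha1 : Real.arctan 1 ≤ a := by simp only [ha]; linarith
  have ha2 : a ≤ Real.arctan 2 := by simp only [ha]; linarith
  have hmem : a ∈ Set.Ioo (-(Real.pi / 2)) (Real.pi / 2) :=
    ⟨lt_of_lt_of_le (Real.neg_pi_div_two_lt_arctan 1) ha1,
     lt_of_le_of_lt ha2 (Real.arctan_lt_pi_div_two 2)⟩
  have h1 : Real.tan (Real.arctan 1) ≤ Real.tan a :=
    Real.strictMonoOn_tan.monotoneOn
      ⟨Real.neg_pi_div_two_lt_arctan 1, Real.arctan_lt_pi_div_two 1⟩ hmem ha1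
  have h2 : Real.tan a ≤ Real.tan (Real.arctan 2) :=
    Real.strictMonoOn_tan.monotoneOn hmem
      ⟨Real.neg_pi_div_two_lt_arctan 2, Real.arctan_lt_pi_div_two 2⟩ ha2
  rw [Real.tan_arctan] at h1 h2
  rw [htan]
  exact ⟨h1, h2⟩

lemma hasDerivAt_g (c θ : ℝ) (hθ : 1 ≤ θ) {y : ℝ} (hy : 0 < y)
    (ht : 1 ≤ Real.tan (Real.log y)) :
    HasDerivAt (g c θ)
      ((c * Real.tan (Real.log y) + θ * (1 / Real.cos (Real.log y)) ^ 2) *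
        Real.tan (Real.log y) ^ (θ - 1) * y ^ (c - 1)) y := by
  have htpos : (0 : ℝ) < Real.tan (Real.log y) := lt_of_lt_of_le one_pos ht
  have hcos : Real.cos (Real.log y) ≠ 0 := by
    intro h
    rw [Real.tan_eq_sin_div_cos, h, div_zero] at htpos
    exact lt_irrefl 0 htpos
  have h1 : HasDerivAt (fun z : ℝ => z ^ c) (c * y ^ (c - 1)) y :=
    Real.hasDerivAt_rpow_const (Or.inl hy.ne')
  have hlog : HasDerivAt Real.log y⁻¹ y := Real.hasDerivAt_log hy.ne'
  have htan : HasDerivAt Real.tan (1 / Real.cos (Real.log y) ^ 2) (Real.log y) :=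
    Real.hasDerivAt_tan hcos
  have hcomp : HasDerivAt (fun z : ℝ => Real.tan (Real.log z))
      (1 / Real.cos (Real.log y) ^ 2 * y⁻¹) y := htan.comp y hlog
  have hpow : HasDerivAt (fun z : ℝ => Real.tan (Real.log z) ^ θ)
      (1 / Real.cos (Real.log y) ^ 2 * y⁻¹ * θ * Real.tan (Real.log y) ^ (θ - 1)) y :=
    hcomp.rpow_const (Or.inr hθ)
  have hmul := h1.mul hpow
  have key : c * y ^ (c - 1) * Real.tan (Real.log y) ^ θ +
      y ^ c * (1 / Real.cos (Real.log y) ^ 2 * y⁻¹ * θ * Real.tan (Real.log y) ^ (θ - 1)) =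
      (c * Real.tan (Real.log y) + θ * (1 / Real.cos (Real.log y)) ^ 2) *
        Real.tan (Real.log y) ^ (θ - 1) * y ^ (c - 1) := by
    have e1 : Real.tan (Real.log y) ^ θ =
        Real.tan (Real.log y) ^ (θ - 1) * Real.tan (Real.log y) := by
      rw [← Real.rpow_add_one htpos.ne' (θ - 1)]
      ring_nf
    have e2 : y ^ c * y⁻¹ = y ^ (c - 1) := by
      rw [Real.rpow_sub hy, Real.rpow_one, div_eq_mul_inv]
    rw [e1, ← e2]
    field_simp
  rw [← key]
  exact hmul

theorem stmt_3 (c θ : ℝ) (hc₁ : 1 < c) (hc₂ : c < 12 / 11) (hθ : 1 < θ)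
    (x : ℝ) (hx : 2 ≤ x) (m : ℝ → ℝ)
    (hm : ∀ t ∈ Set.Icc (g c θ (Δ₁ x)) (g c θ (Δ₂ x)),
      m t ∈ Set.Icc (Δ₁ x) (Δ₂ x) ∧ g c θ (m t) = t) :
    ∀ t ∈ Set.Ioo (g c θ (Δ₁ x)) (g c θ (Δ₂ x)),
      DifferentiableAt ℝ m t ∧
        deriv m t = (m t) ^ (1 - c) /
          ((c * Real.tan (Real.log (m t)) + θ * (1 / Real.cos (Real.log (m t))) ^ 2) *
            Real.tan (Real.log (m t)) ^ (θ - 1)) := by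
  have hΔpos : ∀ {y : ℝ}, y ∈ Set.Icc (Δ₁ x) (Δ₂ x) → 0 < y := fun hy =>
    lt_of_lt_of_le (Real.exp_pos _) hy.1
  -- the derivative of g is positive on the Icc
  have hderiv : ∀ y ∈ Set.Icc (Δ₁ x) (Δ₂ x),
      HasDerivAt (g c θ)
        ((c * Real.tan (Real.log y) + θ * (1 / Real.cos (Real.log y)) ^ 2) *
          Real.tan (Real.log y) ^ (θ - 1) * y ^ (c - 1)) y := fun y hy =>
    hasDerivAt_g c θ hθ.le (hΔpos hy) (tan_log_mem_Icc hy).1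
  have hpos : ∀ y ∈ Set.Icc (Δ₁ x) (Δ₂ x),
      0 < (c * Real.tan (Real.log y) + θ * (1 / Real.cos (Real.log y)) ^ 2) *
        Real.tan (Real.log y) ^ (θ - 1) * y ^ (c - 1) := by
    intro y hy
    have htpos : (0 : ℝ) < Real.tan (Real.log y) :=
      lt_of_lt_of_le one_pos (tan_log_mem_Icc hy).1
    have hcos : Real.cos (Real.log y) ≠ 0 := by
      intro h
      rw [Real.tan_eq_sin_div_cos, h, div_zero] at htpos
      exact lt_irrefl 0 htpos
    have hsec : (0 : ℝ) < (1 / Real.cos (Real.log y)) ^ 2 :=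
      pow_two_pos_of_ne_zero (one_div_ne_zero hcos)
    exact mul_pos (mul_pos
        (add_pos (mul_pos (lt_trans one_pos hc₁) htpos)
          (mul_pos (lt_trans one_pos hθ) hsec))
        (Real.rpow_pos_of_pos htpos _))
      (Real.rpow_pos_of_pos (hΔpos hy) _)
  -- g is strictly monotone on the Icc
  have hgmono : StrictMonoOn (g c θ) (Set.Icc (Δ₁ x) (Δ₂ x)) := by
    apply strictMonoOn_of_deriv_pos (convex_Icc _ _)
    · exact fun y hy => (hderiv y hy).continuousAt.continuousWithinAt
    · intro y hy
      rw [interior_Icc] at hy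
      have hy' : y ∈ Set.Icc (Δ₁ x) (Δ₂ x) := Set.Ioo_subset_Icc_self hy
      rw [(hderiv y hy').deriv]
      exact hpos y hy'
  intro t ht
  have htIcc : t ∈ Set.Icc (g c θ (Δ₁ x)) (g c θ (Δ₂ x)) := Set.Ioo_subset_Icc_self ht
  obtain ⟨hmIcc, hgm⟩ := hm t htIcc
  have hmt1 : Δ₁ x < m t := by
    rcases lt_or_eq_of_le hmIcc.1 with h | h
    · exact h
    · exfalso; rw [← h] at hgm; exact absurd hgm.symm (ne_of_gt ht.1)
  have hmt2 : m t < Δ₂ x := by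
    rcases lt_or_eq_of_le hmIcc.2 with h | h
    · exact h
    · exfalso; rw [h] at hgm; exact absurd hgm (ne_of_gt ht.2)
  -- m is strictly monotone on the target Icc
  have hmmono : StrictMonoOn m (Set.Icc (g c θ (Δ₁ x)) (g c θ (Δ₂ x))) := by
    intro s₁ hs₁ s₂ hs₂ h12
    obtain ⟨h1I, h1g⟩ := hm s₁ hs₁
    obtain ⟨h2I, h2g⟩ := hm s₂ hs₂
    by_contra h
    push_neg at h
    have := hgmono.monotoneOn h2I h1I h
    rw [h1g, h2g] at this
    exact absurd this (not_le_of_gt h12)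
  -- m is surjective onto Icc Δ₁ Δ₂
  have hsurj : Set.Icc (Δ₁ x) (Δ₂ x) ⊆
      m '' Set.Icc (g c θ (Δ₁ x)) (g c θ (Δ₂ x)) := by
    intro y hy
    have hgyIcc : g c θ y ∈ Set.Icc (g c θ (Δ₁ x)) (g c θ (Δ₂ x)) :=
      ⟨hgmono.monotoneOn (Set.left_mem_Icc.mpr (le_of_lt (lt_trans hmt1 hmt2))) hy hy.1,
       hgmono.monotoneOn hy (Set.right_mem_Icc.mpr (le_of_lt (lt_trans hmt1 hmt2))) hy.2⟩
    obtain ⟨hmgI, hmgg⟩ := hm (g c θ y) hgyIcc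
    exact ⟨g c θ y, hgyIcc, hgmono.injOn hmgI hy hmgg⟩
  have hcont : ContinuousAt m t := by
    apply hmmono.continuousAt_of_image_mem_nhds (Icc_mem_nhds ht.1 ht.2)
    exact Filter.mem_of_superset (Icc_mem_nhds hmt1 hmt2) hsurj
  have hev : ∀ᶠ s in nhds t, g c θ (m s) = s :=
    Filter.mem_of_superset (Ioo_mem_nhds ht.1 ht.2)
      (fun s hs => (hm s (Set.Ioo_subset_Icc_self hs)).2)
  have hd : HasDerivAt m
      (((c * Real.tan (Real.log (m t)) + θ * (1 / Real.cos (Real.log (m t))) ^ 2) *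
        Real.tan (Real.log (m t)) ^ (θ - 1) * (m t) ^ (c - 1))⁻¹) t :=
    HasDerivAt.of_local_left_inverse hcont (hderiv (m t) hmIcc)
      (ne_of_gt (hpos (m t) hmIcc)) hev
  refine ⟨hd.differentiableAt, ?_⟩
  rw [hd.deriv]
  have hmpos : (0 : ℝ) < m t := hΔpos hmIcc
  have htpos : (0 : ℝ) < Real.tan (Real.log (m t)) :=
    lt_of_lt_of_le one_pos (tan_log_mem_Icc hmIcc).1
  have hcos : Real.cos (Real.log (m t)) ≠ 0 := by
    intro h
    rw [Real.tan_eq_sin_div_cos, h, div_zero] at htpos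
    exact lt_irrefl 0 htpos
  have hA : (0 : ℝ) < (c * Real.tan (Real.log (m t)) +
      θ * (1 / Real.cos (Real.log (m t))) ^ 2) * Real.tan (Real.log (m t)) ^ (θ - 1) :=
    mul_pos
      (add_pos (mul_pos (lt_trans one_pos hc₁) htpos)
        (mul_pos (lt_trans one_pos hθ) (pow_two_pos_of_ne_zero (one_div_ne_zero hcos))))
      (Real.rpow_pos_of_pos htpos _)
  have hyp : (0 : ℝ) < (m t) ^ (c - 1) := Real.rpow_pos_of_pos hmpos _
  rw [show (1 : ℝ) - c = -(c - 1) by ring, Real.rpow_neg hmpos.le, mul_inv,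
    div_eq_mul_inv, mul_comm]
  rw [div_eq_mul_inv]
end

section
/- There exist constants 0 < c₁ ≤ c₂ depending only on c and θ such that for every x ≥ 2 and every t in the open interval (g(Δ₁), g(Δ₂)), the derivative of the inverse function satisfies c₁·t^{γ−1} ≤ m′(t) ≤ c₂·t^{γ−1}. -/
open Real

private lemma sProps (x y : ℝ) (hy : y ∈ Set.Icc (Δ₁ x) (Δ₂ x)) :
    Real.arctan 1 ≤ Real.log y - Real.pi * (⌊Real.log x / Real.pi⌋ : ℝ) ∧
    Real.log y - Real.pi * (⌊Real.log x / Real.pi⌋ : ℝ) ≤ Real.arctan 2 := by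
  have h1 : Real.log (Δ₁ x) ≤ Real.log y := Real.log_le_log (Real.exp_pos _) hy.1
  have h2 : Real.log y ≤ Real.log (Δ₂ x) :=
    Real.log_le_log ((Real.exp_pos _).trans_le hy.1) hy.2
  rw [Δ₁, Real.log_exp] at h1
  rw [Δ₂, Real.log_exp] at h2
  constructor <;> linarith

private lemma tan_log_eq (x y : ℝ) :
    Real.tan (Real.log y) =
      Real.tan (Real.log y - Real.pi * (⌊Real.log x / Real.pi⌋ : ℝ)) := by
  have h := (Real.tan_periodic.int_mul ⌊Real.log x / Real.pi⌋)
      (Real.log y - Real.pi * (⌊Real.log x / Real.pi⌋ : ℝ))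
  rw [show Real.log y - Real.pi * (⌊Real.log x / Real.pi⌋ : ℝ) +
      (⌊Real.log x / Real.pi⌋ : ℝ) * Real.pi = Real.log y by ring] at h
  exact h

private lemma s_mem_Ioo {s : ℝ} (h1 : Real.arctan 1 ≤ s) (h2 : s ≤ Real.arctan 2) :
    s ∈ Set.Ioo (-(Real.pi / 2)) (Real.pi / 2) :=
  ⟨(Real.arctan_mem_Ioo 1).1.trans_le h1, h2.trans_lt (Real.arctan_lt_pi_div_two 2)⟩

private lemma core (x y : ℝ) (hy : y ∈ Set.Icc (Δ₁ x) (Δ₂ x)) :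
    0 < y ∧ Real.cos (Real.log y) ≠ 0 ∧
      1 ≤ Real.tan (Real.log y) ∧ Real.tan (Real.log y) ≤ 2 := by
  have hy0 : 0 < y := (Real.exp_pos _).trans_le hy.1
  obtain ⟨hs1, hs2⟩ := sProps x y hy
  set s := Real.log y - Real.pi * (⌊Real.log x / Real.pi⌋ : ℝ) with hs
  have hsIoo := s_mem_Ioo hs1 hs2
  have hπ := Real.pi_pos
  have hs1' : Real.pi / 4 ≤ s := by rwa [Real.arctan_one] at hs1
  refine ⟨hy0, ?_, ?_, ?_⟩
  · intro h0
    obtain ⟨n, hn⟩ := Real.cos_eq_zero_iff.mp h0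
    have hj : s = ((2 * n + 1 - 2 * ⌊Real.log x / Real.pi⌋ : ℤ) : ℝ) * Real.pi / 2 := by
      push_cast
      rw [hs, hn]; ring
    set j : ℤ := 2 * n + 1 - 2 * ⌊Real.log x / Real.pi⌋ with hjdef
    have hjpos : (0 : ℤ) < j := by
      have : (0 : ℝ) < (j : ℝ) := by nlinarith [hsIoo.1]
      exact_mod_cast this
    have hj1 : (1 : ℝ) ≤ (j : ℝ) := by exact_mod_cast hjpos
    nlinarith [hsIoo.2]
  · rw [tan_log_eq x y, ← hs, ← Real.tan_arctan 1]
    exact Real.strictMonoOn_tan.monotoneOn (Real.arctan_mem_Ioo 1) hsIoo hs1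
  · rw [tan_log_eq x y, ← hs, ← Real.tan_arctan 2]
    exact Real.strictMonoOn_tan.monotoneOn hsIoo (Real.arctan_mem_Ioo 2) hs2

private lemma tan_mono (x y₁ y₂ : ℝ) (h₁ : y₁ ∈ Set.Icc (Δ₁ x) (Δ₂ x))
    (h₂ : y₂ ∈ Set.Icc (Δ₁ x) (Δ₂ x)) (h : y₁ ≤ y₂) :
    Real.tan (Real.log y₁) ≤ Real.tan (Real.log y₂) := by
  obtain ⟨ha1, ha2⟩ := sProps x y₁ h₁
  obtain ⟨hb1, hb2⟩ := sProps x y₂ h₂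
  have hy₁ : 0 < y₁ := (Real.exp_pos _).trans_le h₁.1
  rw [tan_log_eq x y₁, tan_log_eq x y₂]
  exact Real.strictMonoOn_tan.monotoneOn (s_mem_Ioo ha1 ha2) (s_mem_Ioo hb1 hb2)
    (by have := Real.log_le_log hy₁ h; linarith)

private lemma g_strictMono (c θ x : ℝ) (hc : 0 < c) (hθ : 0 < θ) :
    StrictMonoOn (g c θ) (Set.Icc (Δ₁ x) (Δ₂ x)) := by
  intro y₁ h₁ y₂ h₂ h
  obtain ⟨hy₁, -, hT₁, -⟩ := core x y₁ h₁
  obtain ⟨hy₂, -, hT₂, -⟩ := core x y₂ h₂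
  have hpow : y₁ ^ c < y₂ ^ c := Real.rpow_lt_rpow hy₁.le h hc
  have htan : Real.tan (Real.log y₁) ^ θ ≤ Real.tan (Real.log y₂) ^ θ :=
    Real.rpow_le_rpow (by linarith) (tan_mono x y₁ y₂ h₁ h₂ h.le) hθ.le
  have hTpos : 0 < Real.tan (Real.log y₁) ^ θ :=
    Real.rpow_pos_of_pos (by linarith) θ
  exact mul_lt_mul hpow htan hTpos (Real.rpow_pos_of_pos hy₂ c).le

private lemma g_hasDeriv (c θ x y : ℝ) (hy : y ∈ Set.Icc (Δ₁ x) (Δ₂ x)) :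
    HasDerivAt (g c θ)
      (y ^ (c - 1) * (c * Real.tan (Real.log y) ^ θ +
        θ * Real.tan (Real.log y) ^ (θ - 1) * (1 + Real.tan (Real.log y) ^ 2))) y := by
  obtain ⟨hy0, hcos, hT1, hT2⟩ := core x y hy
  have h1 : HasDerivAt (fun z : ℝ => z ^ c) (c * y ^ (c - 1)) y :=
    Real.hasDerivAt_rpow_const (Or.inl hy0.ne')
  have h2 : HasDerivAt Real.log y⁻¹ y := Real.hasDerivAt_log hy0.ne'
  have h3 : HasDerivAt Real.tan (1 / Real.cos (Real.log y) ^ 2) (Real.log y) :=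
    Real.hasDerivAt_tan hcos
  have h4 : HasDerivAt (fun z : ℝ => Real.tan (Real.log z))
      (1 / Real.cos (Real.log y) ^ 2 * y⁻¹) y := h3.comp y h2
  have h5 := h4.rpow_const (p := θ) (Or.inl (by linarith))
  have h6 := h1.mul h5
  have hcos2 : 1 / Real.cos (Real.log y) ^ 2 = 1 + Real.tan (Real.log y) ^ 2 := by
    rw [one_div, ← Real.inv_one_add_tan_sq hcos, inv_inv]
  have hyc : y ^ c * y⁻¹ = y ^ (c - 1) := by
    rw [Real.rpow_sub hy0, Real.rpow_one]; field_simp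
  have hyc' : y ^ c = y ^ (c - 1) * y := by
    rw [Real.rpow_sub hy0, Real.rpow_one]; field_simp
  show HasDerivAt (fun y => y ^ c * Real.tan (Real.log y) ^ θ) _ y
  refine h6.congr_deriv ?_
  rw [hcos2, hyc']
  field_simp

theorem stmt_4 (c θ : ℝ) (hc₁ : 1 < c) (hc₂ : c < 12 / 11) (hθ : 1 < θ)
    (m : ℝ → ℝ → ℝ)
    (hm : ∀ x : ℝ, 2 ≤ x → ∀ t ∈ Set.Icc (g c θ (Δ₁ x)) (g c θ (Δ₂ x)),
      m x t ∈ Set.Icc (Δ₁ x) (Δ₂ x) ∧ g c θ (m x t) = t) :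
    ∃ c₁ c₂ : ℝ, 0 < c₁ ∧ c₁ ≤ c₂ ∧
      ∀ x : ℝ, 2 ≤ x → ∀ t ∈ Set.Ioo (g c θ (Δ₁ x)) (g c θ (Δ₂ x)),
        c₁ * t ^ (1 / c - 1) ≤ deriv (m x) t ∧ deriv (m x) t ≤ c₂ * t ^ (1 / c - 1) := by
  have hc0 : (0 : ℝ) < c := by linarith
  have hθ0 : (0 : ℝ) < θ := by linarith
  set e : ℝ := 1 - 1 / c with he
  have he0 : 0 < e := by
    have : 1 / c < 1 := by rw [div_lt_one hc0]; linarith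
    rw [he]; linarith
  -- constants
  have h2θ : (1 : ℝ) ≤ 2 ^ θ := by
    rw [show (1:ℝ) = 2 ^ (0:ℝ) by simp]
    exact Real.rpow_le_rpow_of_exponent_le one_le_two hθ0.le
  have h2θ1 : (1 : ℝ) ≤ 2 ^ (θ - 1) := by
    rw [show (1:ℝ) = 2 ^ (0:ℝ) by simp]
    exact Real.rpow_le_rpow_of_exponent_le one_le_two (by linarith)
  have h2θe : (1 : ℝ) ≤ 2 ^ (θ * e) := by
    rw [show (1:ℝ) = 2 ^ (0:ℝ) by simp]
    exact Real.rpow_le_rpow_of_exponent_le one_le_two (by positivity)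
  set A : ℝ := c + 2 * θ with hA
  set B : ℝ := c * 2 ^ θ + 5 * (θ * 2 ^ (θ - 1)) with hB
  have hApos : 0 < A := by positivity
  have hBpos : 0 < B := by positivity
  have hAB : A ≤ B := by
    have h1 := mul_le_mul_of_nonneg_left h2θ hc0.le
    have h2 := mul_le_mul_of_nonneg_left h2θ1 hθ0.le
    rw [hA, hB]; linarith
  refine ⟨B⁻¹, 2 ^ (θ * e) * A⁻¹, by positivity, ?_, ?_⟩
  · calc B⁻¹ ≤ A⁻¹ := inv_anti₀ hApos hAB
      _ ≤ 2 ^ (θ * e) * A⁻¹ := by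
          have := mul_le_mul_of_nonneg_right h2θe (inv_pos.mpr hApos).le
          rwa [one_mul] at this
  intro x hx t ht
  have htIcc : t ∈ Set.Icc (g c θ (Δ₁ x)) (g c θ (Δ₂ x)) := ⟨ht.1.le, ht.2.le⟩
  obtain ⟨hmem, hgm⟩ := hm x hx t htIcc
  have hΔle : Δ₁ x ≤ Δ₂ x := by
    rw [Δ₁, Δ₂, Real.exp_le_exp]
    have := Real.arctan_strictMono.monotone (by norm_num : (1:ℝ) ≤ 2)
    linarith
  have hgmono := g_strictMono c θ x hc0 hθ0
  -- properties of y := m x t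
  set y : ℝ := m x t with hy
  obtain ⟨hy0, hcos, hT1, hT2⟩ := core x y hmem
  set T : ℝ := Real.tan (Real.log y) with hT
  -- t is positive
  have ht0 : 0 < t := by
    rw [← hgm]
    exact mul_pos (Real.rpow_pos_of_pos hy0 c) (Real.rpow_pos_of_pos (by linarith) θ)
  -- strict inequalities for y
  have hyΔ1 : Δ₁ x < y := by
    rcases eq_or_lt_of_le hmem.1 with h | h
    · exfalso; rw [← h] at hgm; rw [hgm] at ht; exact lt_irrefl t ht.1
    · exact h
  have hyΔ2 : y < Δ₂ x := by
    rcases eq_or_lt_of_le hmem.2 with h | h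
    · exfalso; rw [h] at hgm; rw [hgm] at ht; exact lt_irrefl t ht.2
    · exact h
  -- m x is strictly monotone on the interval
  have hmmono : StrictMonoOn (m x) (Set.Icc (g c θ (Δ₁ x)) (g c θ (Δ₂ x))) := by
    intro t₁ h₁ t₂ h₂ h12
    obtain ⟨hm₁, hg₁⟩ := hm x hx t₁ h₁
    obtain ⟨hm₂, hg₂⟩ := hm x hx t₂ h₂
    rcases lt_or_ge (m x t₁) (m x t₂) with h | h
    · exact h
    · exfalso
      have := hgmono.monotoneOn hm₂ hm₁ h
      rw [hg₁, hg₂] at this; linarith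
  -- surjectivity onto Icc Δ₁ Δ₂
  have hsub : Set.Icc (Δ₁ x) (Δ₂ x) ⊆ m x '' Set.Icc (g c θ (Δ₁ x)) (g c θ (Δ₂ x)) := by
    intro z hz
    have hgz : g c θ z ∈ Set.Icc (g c θ (Δ₁ x)) (g c θ (Δ₂ x)) :=
      ⟨hgmono.monotoneOn (Set.left_mem_Icc.mpr hΔle) hz hz.1,
       hgmono.monotoneOn hz (Set.right_mem_Icc.mpr hΔle) hz.2⟩
    refine ⟨g c θ z, hgz, ?_⟩
    obtain ⟨hmz, hgmz⟩ := hm x hx (g c θ z) hgz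
    exact hgmono.injOn hmz hz hgmz
  -- continuity of m x at t
  have hnhds : Set.Icc (g c θ (Δ₁ x)) (g c θ (Δ₂ x)) ∈ nhds t := Icc_mem_nhds ht.1 ht.2
  have hcont : ContinuousAt (m x) t :=
    hmmono.continuousAt_of_image_mem_nhds hnhds
      (Filter.mem_of_superset (Icc_mem_nhds hyΔ1 hyΔ2) hsub)
  -- derivative of g at y
  set E : ℝ := c * T ^ θ + θ * T ^ (θ - 1) * (1 + T ^ 2) with hE
  set D : ℝ := y ^ (c - 1) * E with hD
  have hgderiv : HasDerivAt (g c θ) D y := g_hasDeriv c θ x y hmem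
  -- bounds on E
  have hTθ1 : (1 : ℝ) ≤ T ^ θ := by
    have h := Real.rpow_le_rpow (z := θ) (by norm_num) hT1 hθ0.le
    rwa [Real.one_rpow] at h
  have hTθ1' : (1 : ℝ) ≤ T ^ (θ - 1) := by
    have h := Real.rpow_le_rpow (z := θ - 1) (by norm_num) hT1 (by linarith)
    rwa [Real.one_rpow] at h
  have hTθ2 : T ^ θ ≤ 2 ^ θ := Real.rpow_le_rpow (by linarith) hT2 hθ0.le
  have hTθ2' : T ^ (θ - 1) ≤ 2 ^ (θ - 1) := Real.rpow_le_rpow (by linarith) hT2 (by linarith)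
  have hsq2 : (2 : ℝ) ≤ 1 + T ^ 2 := by
    have h := mul_le_mul hT1 hT1 zero_le_one (by linarith : (0:ℝ) ≤ T)
    rw [pow_two]; linarith
  have hsq5 : 1 + T ^ 2 ≤ (5 : ℝ) := by
    have h := mul_le_mul hT2 hT2 (by linarith : (0:ℝ) ≤ T) (by norm_num : (0:ℝ) ≤ 2)
    rw [pow_two]; linarith
  have hbl : (1 : ℝ) * 2 ≤ T ^ (θ - 1) * (1 + T ^ 2) :=
    mul_le_mul hTθ1' hsq2 (by norm_num) (by linarith)
  have hbu : T ^ (θ - 1) * (1 + T ^ 2) ≤ 2 ^ (θ - 1) * 5 :=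
    mul_le_mul hTθ2' hsq5 (by linarith) (by linarith)
  have hEA : A ≤ E := by
    have h1 := mul_le_mul_of_nonneg_left hTθ1 hc0.le
    have h2 := mul_le_mul_of_nonneg_left hbl hθ0.le
    rw [hA, hE]; linarith
  have hEB : E ≤ B := by
    have h1 := mul_le_mul_of_nonneg_left hTθ2 hc0.le
    have h2 := mul_le_mul_of_nonneg_left hbu hθ0.le
    rw [hB, hE]; linarith
  have hEpos : 0 < E := lt_of_lt_of_le hApos hEA
  have hDpos : 0 < D := mul_pos (Real.rpow_pos_of_pos hy0 _) hEpos
  -- derivative of m x at t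
  have hmderiv : HasDerivAt (m x) D⁻¹ t := by
    refine HasDerivAt.of_local_left_inverse hcont hgderiv hDpos.ne' ?_
    exact Filter.eventually_of_mem hnhds fun t' ht' => (hm x hx t' ht').2
  have hderiv : deriv (m x) t = D⁻¹ := hmderiv.deriv
  -- relate y^(c-1) to t
  have hyce : y ^ (c - 1) = (y ^ c) ^ e := by
    rw [← Real.rpow_mul hy0.le]
    congr 1
    rw [he, mul_sub, mul_one, mul_one_div_cancel hc0.ne']
  have hu0 : 0 < y ^ c := Real.rpow_pos_of_pos hy0 c
  have htform : t = y ^ c * T ^ θ := by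
    rw [hT]; exact hgm.symm
  have hut : y ^ c ≤ t := by
    rw [htform]; exact le_mul_of_one_le_right hu0.le hTθ1
  have htu : t ≤ 2 ^ θ * y ^ c := by
    rw [htform, mul_comm ((2:ℝ) ^ θ) (y ^ c)]
    exact mul_le_mul_of_nonneg_left hTθ2 hu0.le
  have hue1 : (y ^ c) ^ e ≤ t ^ e := Real.rpow_le_rpow hu0.le hut he0.le
  have hue2 : t ^ e ≤ 2 ^ (θ * e) * (y ^ c) ^ e := by
    calc t ^ e ≤ (2 ^ θ * y ^ c) ^ e := Real.rpow_le_rpow ht0.le htu he0.le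
      _ = (2 ^ θ) ^ e * (y ^ c) ^ e := Real.mul_rpow (by positivity) hu0.le
      _ = 2 ^ (θ * e) * (y ^ c) ^ e := by rw [← Real.rpow_mul (by norm_num : (0:ℝ) ≤ 2)]
  have hte0 : 0 < t ^ e := Real.rpow_pos_of_pos ht0 e
  -- bounds on D
  have hDup : D ≤ B * t ^ e := by
    rw [hD, hyce]
    calc (y ^ c) ^ e * E ≤ t ^ e * B :=
          mul_le_mul hue1 hEB hEpos.le hte0.le
      _ = B * t ^ e := by ring
  have hDlow : A * t ^ e / 2 ^ (θ * e) ≤ D := by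
    rw [hD, hyce]
    rw [div_le_iff₀ (by positivity)]
    calc A * t ^ e ≤ A * (2 ^ (θ * e) * (y ^ c) ^ e) := by
          apply mul_le_mul_of_nonneg_left hue2 hApos.le
      _ = (y ^ c) ^ e * A * 2 ^ (θ * e) := by ring
      _ ≤ (y ^ c) ^ e * E * 2 ^ (θ * e) := by
          have h1 : (0:ℝ) ≤ (y ^ c) ^ e := (Real.rpow_pos_of_pos hu0 e).le
          have h2 : (0:ℝ) ≤ 2 ^ (θ * e) := by positivity
          exact mul_le_mul_of_nonneg_right (mul_le_mul_of_nonneg_left hEA h1) h2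
  have hDlowpos : 0 < A * t ^ e / 2 ^ (θ * e) := by positivity
  -- wrap up
  have htexp : t ^ (1 / c - 1) = (t ^ e)⁻¹ := by
    rw [show (1 / c - 1 : ℝ) = -e by rw [he]; ring, Real.rpow_neg ht0.le]
  rw [hderiv, htexp]
  constructor
  · calc B⁻¹ * (t ^ e)⁻¹ = (B * t ^ e)⁻¹ := by rw [mul_inv]
      _ ≤ D⁻¹ := inv_anti₀ hDpos hDup
  · calc D⁻¹ ≤ (A * t ^ e / 2 ^ (θ * e))⁻¹ := inv_anti₀ hDlowpos hDlow
      _ = 2 ^ (θ * e) * A⁻¹ * (t ^ e)⁻¹ := by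
          rw [div_eq_mul_inv, mul_inv, mul_inv, inv_inv]; ring
end

section
/- The inverse function m is twice differentiable on the open interval (g(Δ₁), g(Δ₂)), and there exist constants 0 < c₁ ≤ c₂ depending only on c and θ such that for every x ≥ 2 and every t in this interval, c₁·t^{γ−2} ≤ |m″(t)| ≤ c₂·t^{γ−2}. -/
set_option maxHeartbeats 1000000

open Real

noncomputable def Qf (c θ T : ℝ) : ℝ := c * T ^ θ + θ * T ^ (θ - 1) * (1 + T ^ 2)

noncomputable def Pf (c θ T : ℝ) : ℝ :=
  (c - 1) * Qf c θ T + c * θ * T ^ (θ - 1) * (1 + T ^ 2)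
    + θ * (θ - 1) * T ^ (θ - 2) * (1 + T ^ 2) ^ 2 + 2 * θ * T ^ θ * (1 + T ^ 2)

noncomputable def g1 (c θ y : ℝ) : ℝ := y ^ (c - 1) * Qf c θ (Real.tan (Real.log y))

noncomputable def g2 (c θ y : ℝ) : ℝ := y ^ (c - 2) * Pf c θ (Real.tan (Real.log y))

noncomputable def c1v (c θ : ℝ) : ℝ := (4 * θ) / (2 ^ θ * (c + 5 * θ)) ^ 3

noncomputable def Mv (c θ : ℝ) : ℝ :=
  2 ^ θ * ((c - 1) * (c + 5 * θ) + 5 * (c * θ) + 25 * (θ * (θ - 1)) + 10 * θ)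

noncomputable def c2v (c θ : ℝ) : ℝ := Mv c θ / (c + 2 * θ) ^ 3 * (2 ^ θ) ^ (2 - 1 / c)

lemma tan_facts (x : ℝ) {y : ℝ} (hy : y ∈ Set.Icc (Δ₁ x) (Δ₂ x)) :
    0 < y ∧ Real.cos (Real.log y) ≠ 0 ∧
      1 ≤ Real.tan (Real.log y) ∧ Real.tan (Real.log y) ≤ 2 := by
  set n : ℤ := ⌊Real.log x / Real.pi⌋ with hn
  have h1 : (0:ℝ) < Δ₁ x := Real.exp_pos _
  have hy0 : 0 < y := lt_of_lt_of_le h1 hy.1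
  have hl1 : Real.log (Δ₁ x) = Real.pi * n + Real.arctan 1 := Real.log_exp _
  have hl2 : Real.log (Δ₂ x) = Real.pi * n + Real.arctan 2 := Real.log_exp _
  have hu1 : Real.pi * n + Real.arctan 1 ≤ Real.log y := by
    rw [← hl1]; exact Real.log_le_log h1 hy.1
  have hu2 : Real.log y ≤ Real.pi * n + Real.arctan 2 := by
    rw [← hl2]; exact Real.log_le_log hy0 hy.2
  set u : ℝ := Real.log y - Real.pi * n with hu
  have hua : Real.arctan 1 ≤ u := by simp only [hu]; linarith
  have hub : u ≤ Real.arctan 2 := by simp only [hu]; linarith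
  have htan_eq : Real.tan (Real.log y) = Real.tan u := by
    have hper := (Real.tan_periodic.int_mul n) u
    rw [← hper]; congr 1; simp only [hu]; ring
  have hmem1 : Real.arctan 1 ∈ Set.Ioo (-(Real.pi/2)) (Real.pi/2) :=
    ⟨Real.neg_pi_div_two_lt_arctan 1, Real.arctan_lt_pi_div_two 1⟩
  have hmem2 : Real.arctan 2 ∈ Set.Ioo (-(Real.pi/2)) (Real.pi/2) :=
    ⟨Real.neg_pi_div_two_lt_arctan 2, Real.arctan_lt_pi_div_two 2⟩
  have hmemu : u ∈ Set.Ioo (-(Real.pi/2)) (Real.pi/2) :=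
    ⟨lt_of_lt_of_le hmem1.1 hua, lt_of_le_of_lt hub hmem2.2⟩
  have ht1 : 1 ≤ Real.tan u := by
    have := Real.strictMonoOn_tan.monotoneOn hmem1 hmemu hua
    rwa [Real.tan_arctan] at this
  have ht2 : Real.tan u ≤ 2 := by
    have := Real.strictMonoOn_tan.monotoneOn hmemu hmem2 hub
    rwa [Real.tan_arctan] at this
  refine ⟨hy0, ?_, by rw [htan_eq]; exact ht1, by rw [htan_eq]; exact ht2⟩
  intro hc
  have : Real.tan (Real.log y) = 0 := by
    rw [Real.tan_eq_sin_div_cos, hc, div_zero]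
  rw [htan_eq] at this
  linarith

lemma tanlog_deriv {y : ℝ} (hy : 0 < y) (hcos : Real.cos (Real.log y) ≠ 0) :
    HasDerivAt (fun z => Real.tan (Real.log z))
      ((1 + Real.tan (Real.log y) ^ 2) * y⁻¹) y := by
  have hlog : HasDerivAt Real.log y⁻¹ y := Real.hasDerivAt_log hy.ne'
  have htan : HasDerivAt Real.tan (1 / Real.cos (Real.log y) ^ 2) (Real.log y) :=
    Real.hasDerivAt_tan hcos
  have h := htan.comp y hlog
  have heq : 1 / Real.cos (Real.log y) ^ 2 = 1 + Real.tan (Real.log y) ^ 2 := by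
    rw [one_div, ← Real.inv_one_add_tan_sq hcos, inv_inv]
  rw [heq] at h
  exact h

lemma hasDerivAt_g_s5 (c θ : ℝ) {y : ℝ} (hy : 0 < y) (hcos : Real.cos (Real.log y) ≠ 0)
    (hT : 1 ≤ Real.tan (Real.log y)) :
    HasDerivAt (g c θ) (g1 c θ y) y := by
  set T := Real.tan (Real.log y) with hTdef
  have hT0 : T ≠ 0 := by intro h; rw [h] at hT; linarith
  have htl := tanlog_deriv hy hcos
  have hpow : HasDerivAt (fun u : ℝ => u ^ θ) (θ * T ^ (θ - 1)) T :=
    Real.hasDerivAt_rpow_const (Or.inl hT0)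
  have hcompθ : HasDerivAt (fun z => Real.tan (Real.log z) ^ θ)
      (θ * T ^ (θ - 1) * ((1 + T ^ 2) * y⁻¹)) y := by exact hpow.comp y htl
  have hyc : HasDerivAt (fun z : ℝ => z ^ c) (c * y ^ (c - 1)) y :=
    Real.hasDerivAt_rpow_const (Or.inl hy.ne')
  have hmul := hyc.fun_mul hcompθ
  have hfun : (g c θ) = fun z => z ^ c * Real.tan (Real.log z) ^ θ := rfl
  rw [hfun]
  refine hmul.congr_deriv ?_
  have hyc1 : y ^ (c - 1) = y ^ c * y⁻¹ := by
    rw [Real.rpow_sub_one hy.ne', div_eq_mul_inv]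
  simp only [g1, Qf, ← hTdef, hyc1]
  ring

lemma hasDerivAt_g1 (c θ : ℝ) {y : ℝ} (hy : 0 < y)
    (hcos : Real.cos (Real.log y) ≠ 0) (hT : 1 ≤ Real.tan (Real.log y)) :
    HasDerivAt (g1 c θ) (g2 c θ y) y := by
  set T := Real.tan (Real.log y) with hTdef
  have hT0 : (0:ℝ) < T := lt_of_lt_of_le one_pos hT
  have htl := tanlog_deriv hy hcos
  have hq1 : HasDerivAt (fun u : ℝ => c * u ^ θ) (c * (θ * T ^ (θ - 1))) T :=
    (Real.hasDerivAt_rpow_const (Or.inl hT0.ne')).const_mul c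
  have hq2a : HasDerivAt (fun u : ℝ => θ * u ^ (θ - 1)) (θ * ((θ - 1) * T ^ (θ - 1 - 1))) T :=
    (Real.hasDerivAt_rpow_const (Or.inl hT0.ne')).const_mul θ
  have hq2b : HasDerivAt (fun u : ℝ => 1 + u ^ 2) (2 * T) T := by
    simpa using ((hasDerivAt_pow 2 T).const_add 1)
  have hq2 := hq2a.mul hq2b
  have hQ : HasDerivAt (Qf c θ)
      (c * (θ * T ^ (θ - 1)) +
        (θ * ((θ - 1) * T ^ (θ - 1 - 1)) * (1 + T ^ 2) + θ * T ^ (θ - 1) * (2 * T))) T :=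
    hq1.add hq2
  have hQm : HasDerivAt (fun z => Qf c θ (Real.tan (Real.log z)))
      ((c * (θ * T ^ (θ - 1)) +
        (θ * ((θ - 1) * T ^ (θ - 1 - 1)) * (1 + T ^ 2) + θ * T ^ (θ - 1) * (2 * T)))
        * ((1 + T ^ 2) * y⁻¹)) y := by exact hQ.comp y htl
  have hyc : HasDerivAt (fun z : ℝ => z ^ (c - 1)) ((c - 1) * y ^ (c - 1 - 1)) y :=
    Real.hasDerivAt_rpow_const (Or.inl hy.ne')
  have hmul := hyc.fun_mul hQm
  have hfun : (g1 c θ) = fun z => z ^ (c - 1) * Qf c θ (Real.tan (Real.log z)) := rfl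
  rw [hfun]
  refine hmul.congr_deriv ?_
  have hyne : y ≠ 0 := hy.ne'
  have hTne : T ≠ 0 := hT0.ne'
  have e1 : y ^ (c - 1 - 1) = y ^ (c - 2) := by rw [show c - 1 - 1 = c - 2 by ring]
  have e2 : y ^ (c - 1) = y ^ (c - 2) * y := by
    rw [show c - 1 = c - 2 + 1 by ring, Real.rpow_add_one hyne]
  have e3 : T ^ (θ - 1) = T ^ (θ - 2) * T := by
    rw [show θ - 1 = θ - 2 + 1 by ring, Real.rpow_add_one hTne]
  have e4 : T ^ θ = T ^ (θ - 1) * T := by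
    rw [show θ = θ - 1 + 1 by ring, Real.rpow_add_one hTne]
    rw [show θ - 1 + 1 - 1 = θ - 1 by ring]
  have e5 : T ^ (θ - 1 - 1) = T ^ (θ - 2) := by rw [show θ - 1 - 1 = θ - 2 by ring]
  simp only [g2, Pf, Qf, ← hTdef, e1, e5]
  rw [e2, e4, e3]
  field_simp
  ring

lemma PQ_bounds (c θ : ℝ) (hc : 1 < c) (hθ : 1 < θ) {T : ℝ} (hT1 : 1 ≤ T) (hT2 : T ≤ 2) :
    c + 2 * θ ≤ Qf c θ T ∧ Qf c θ T ≤ 2 ^ θ * (c + 5 * θ) ∧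
    4 * θ ≤ Pf c θ T ∧ Pf c θ T ≤ Mv c θ := by
  have hT0 : (0:ℝ) < T := lt_of_lt_of_le one_pos hT1
  have hθ0 : (0:ℝ) < θ := lt_trans one_pos hθ
  set K : ℝ := 2 ^ θ with hKdef
  set A : ℝ := T ^ θ with hA
  set B : ℝ := T ^ (θ - 1) with hB
  set C : ℝ := T ^ (θ - 2) with hC
  set S : ℝ := 1 + T ^ 2 with hS
  have hK1 : (1:ℝ) ≤ K := Real.one_le_rpow one_le_two hθ0.le
  have key : ∀ α : ℝ, α ≤ θ → T ^ α ≤ K := by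
    intro α hα
    calc T ^ α ≤ T ^ θ := Real.rpow_le_rpow_of_exponent_le hT1 hα
    _ ≤ K := Real.rpow_le_rpow hT0.le hT2 hθ0.le
  have kA : A ≤ K := key θ le_rfl
  have kB : B ≤ K := key (θ - 1) (by linarith)
  have kC : C ≤ K := key (θ - 2) (by linarith)
  have lA : 1 ≤ A := Real.one_le_rpow hT1 hθ0.le
  have lB : 1 ≤ B := Real.one_le_rpow hT1 (by linarith)
  have lC : (0:ℝ) < C := Real.rpow_pos_of_pos hT0 _
  have hS1 : (2:ℝ) ≤ S := by simp only [hS]; nlinarith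
  have hS2 : S ≤ (5:ℝ) := by simp only [hS]; nlinarith
  have hQeq : Qf c θ T = c * A + θ * (B * S) := by simp only [Qf, ← hA, ← hB, ← hS]; ring
  have hPeq : Pf c θ T = (c - 1) * Qf c θ T + c * θ * (B * S) + θ * (θ - 1) * (C * S ^ 2)
      + 2 * θ * (A * S) := by simp only [Pf, ← hA, ← hB, ← hC, ← hS]; ring
  have nBS2 : 0 ≤ B * (S - 2) := mul_nonneg (by linarith) (by linarith)
  have nAS2 : 0 ≤ A * (S - 2) := mul_nonneg (by linarith) (by linarith)
  have nBS5 : 0 ≤ B * (5 - S) := mul_nonneg (by linarith) (by linarith)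
  have nAS5 : 0 ≤ A * (5 - S) := mul_nonneg (by linarith) (by linarith)
  have nCS25 : 0 ≤ C * (25 - S ^ 2) := mul_nonneg lC.le (by nlinarith)
  have hcθ : (0:ℝ) ≤ c * θ := mul_nonneg (by linarith) (by linarith)
  have hθθ1 : (0:ℝ) ≤ θ * (θ - 1) := mul_nonneg (by linarith) (by linarith)
  have hQlo : c + 2 * θ ≤ Qf c θ T := by
    rw [hQeq]
    linarith [mul_nonneg (by linarith : (0:ℝ) ≤ c) (by linarith : (0:ℝ) ≤ A - 1),
      mul_nonneg hθ0.le nBS2,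
      mul_nonneg (by linarith : (0:ℝ) ≤ 2 * θ) (by linarith : (0:ℝ) ≤ B - 1)]
  have hQhi : Qf c θ T ≤ K * (c + 5 * θ) := by
    rw [hQeq]
    linarith [mul_nonneg (by linarith : (0:ℝ) ≤ c) (by linarith : (0:ℝ) ≤ K - A),
      mul_nonneg hθ0.le nBS5,
      mul_nonneg (by linarith : (0:ℝ) ≤ 5 * θ) (by linarith : (0:ℝ) ≤ K - B)]
  have hPlo : 4 * θ ≤ Pf c θ T := by
    rw [hPeq]
    have p1 : (0:ℝ) ≤ (c - 1) * Qf c θ T := mul_nonneg (by linarith) (by linarith)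
    have p2 : (0:ℝ) ≤ c * θ * (B * S) :=
      mul_nonneg hcθ (mul_nonneg (by linarith) (by linarith))
    have p3 : (0:ℝ) ≤ θ * (θ - 1) * (C * S ^ 2) :=
      mul_nonneg hθθ1 (mul_nonneg lC.le (sq_nonneg S))
    have p4 : 4 * θ ≤ 2 * θ * (A * S) := by
      have d1 := mul_nonneg (by linarith : (0:ℝ) ≤ 2 * θ) nAS2
      have d2 := mul_nonneg (by linarith : (0:ℝ) ≤ 4 * θ) (by linarith : (0:ℝ) ≤ A - 1)
      nlinarith [d1, d2]
    linarith
  have hPhi : Pf c θ T ≤ Mv c θ := by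
    rw [hPeq]
    unfold Mv
    rw [← hKdef]
    have b1 : (c - 1) * Qf c θ T ≤ (c - 1) * (K * (c + 5 * θ)) :=
      mul_le_mul_of_nonneg_left hQhi (by linarith)
    have b2 : c * θ * (B * S) ≤ c * θ * (5 * K) :=
      mul_le_mul_of_nonneg_left (by linarith [nBS5] : B * S ≤ 5 * K) hcθ
    have b3 : θ * (θ - 1) * (C * S ^ 2) ≤ θ * (θ - 1) * (25 * K) :=
      mul_le_mul_of_nonneg_left (by linarith [nCS25] : C * S ^ 2 ≤ 25 * K) hθθ1
    have b4 : 2 * θ * (A * S) ≤ 2 * θ * (5 * K) :=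
      mul_le_mul_of_nonneg_left (by linarith [nAS5] : A * S ≤ 5 * K) (by linarith)
    linarith [b1, b2, b3, b4]
  exact ⟨hQlo, hQhi, hPlo, hPhi⟩

lemma ratio_bounds (c θ : ℝ) (hc : 1 < c) (hθ : 1 < θ) {y : ℝ} (hy : 0 < y)
    (hT1 : 1 ≤ Real.tan (Real.log y)) (hT2 : Real.tan (Real.log y) ≤ 2) :
    c1v c θ * (g c θ y) ^ (1 / c - 2) ≤ g2 c θ y / (g1 c θ y) ^ 3 ∧
    g2 c θ y / (g1 c θ y) ^ 3 ≤ c2v c θ * (g c θ y) ^ (1 / c - 2) := by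
  set T : ℝ := Real.tan (Real.log y) with hTdef
  obtain ⟨hQlo, hQhi, hPlo, hPhi⟩ := PQ_bounds c θ hc hθ hT1 hT2
  have hθ0 : (0:ℝ) < θ := by linarith
  set K : ℝ := (2:ℝ) ^ θ with hKdef
  have hK0 : (0:ℝ) < K := Real.rpow_pos_of_pos two_pos θ
  have hK1 : (1:ℝ) ≤ K := Real.one_le_rpow one_le_two hθ0.le
  set Q : ℝ := Qf c θ T with hQdef
  set P : ℝ := Pf c θ T with hPdef
  set e : ℝ := 1 / c - 2 with hedef
  have hQ0 : 0 < Q := by linarith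
  have hP0 : 0 < P := by linarith
  have hyc : 0 < y ^ c := Real.rpow_pos_of_pos hy c
  have hTθ1 : 1 ≤ T ^ θ := Real.one_le_rpow hT1 hθ0.le
  have hTθK : T ^ θ ≤ K := by
    calc T ^ θ ≤ 2 ^ θ := Real.rpow_le_rpow (by linarith) hT2 hθ0.le
    _ = K := rfl
  have hgt : g c θ y = y ^ c * T ^ θ := rfl
  have ht_lo : y ^ c ≤ g c θ y := by
    rw [hgt]; exact le_mul_of_one_le_right hyc.le hTθ1
  have ht_hi : g c θ y ≤ K * y ^ c := by
    rw [hgt, mul_comm K (y ^ c)]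
    exact mul_le_mul_of_nonneg_left hTθK hyc.le
  have ht0 : 0 < g c θ y := lt_of_lt_of_le hyc ht_lo
  have he : e ≤ 0 := by
    have : 1 / c ≤ 1 := by rw [div_le_one (by linarith)]; linarith
    simp only [hedef]; linarith
  have hce : c * e = 1 - 2 * c := by
    simp only [hedef]; field_simp
  have hyce : (y ^ c) ^ e = y ^ (1 - 2 * c) := by
    rw [← Real.rpow_mul hy.le, hce]
  have h_t_e_le : (g c θ y) ^ e ≤ y ^ (1 - 2 * c) := by
    rw [← hyce]; exact Real.rpow_le_rpow_of_nonpos hyc ht_lo he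
  have h_t_e_ge : K ^ e * y ^ (1 - 2 * c) ≤ (g c θ y) ^ e := by
    have h1 := Real.rpow_le_rpow_of_nonpos ht0 ht_hi he
    rwa [Real.mul_rpow hK0.le hyc.le, hyce] at h1
  have hval : g2 c θ y / (g1 c θ y) ^ 3 = (P / Q ^ 3) * y ^ (1 - 2 * c) := by
    have h3 : (y ^ (c - 1)) ^ (3:ℕ) = y ^ (3 * c - 3) := by
      rw [← Real.rpow_natCast (y ^ (c - 1)) 3, ← Real.rpow_mul hy.le,
        show (c - 1) * ((3:ℕ):ℝ) = 3 * c - 3 by push_cast; ring]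
    have h4 : y ^ (c - 2) = y ^ (3 * c - 3) * y ^ (1 - 2 * c) := by
      rw [← Real.rpow_add hy, show 3 * c - 3 + (1 - 2 * c) = c - 2 by ring]
    have hg1 : g1 c θ y = y ^ (c - 1) * Q := rfl
    have hg2 : g2 c θ y = y ^ (c - 2) * P := rfl
    have hy3 : (0:ℝ) < y ^ (3 * c - 3) := Real.rpow_pos_of_pos hy _
    rw [hg1, hg2, mul_pow, h3, h4]
    field_simp
  have hylo : (0:ℝ) ≤ y ^ (1 - 2 * c) := (Real.rpow_pos_of_pos hy _).le
  constructor
  · have hc1v : 0 < c1v c θ := by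
      unfold c1v
      exact div_pos (by linarith) (pow_pos (mul_pos hK0 (by linarith)) 3)
    have step1 : c1v c θ * (g c θ y) ^ e ≤ c1v c θ * y ^ (1 - 2 * c) :=
      mul_le_mul_of_nonneg_left h_t_e_le hc1v.le
    have step2 : c1v c θ ≤ P / Q ^ 3 := by
      unfold c1v
      exact div_le_div₀ hP0.le hPlo (pow_pos hQ0 3)
        (pow_le_pow_left₀ hQ0.le hQhi 3)
    have step3 : c1v c θ * y ^ (1 - 2 * c) ≤ (P / Q ^ 3) * y ^ (1 - 2 * c) :=
      mul_le_mul_of_nonneg_right step2 hylo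
    rw [hval]
    exact le_trans step1 step3
  · have hM0 : 0 ≤ Mv c θ := le_trans hP0.le hPhi
    have hMv0 : 0 ≤ Mv c θ / (c + 2 * θ) ^ 3 :=
      div_nonneg hM0 (pow_pos (by linarith : (0:ℝ) < c + 2 * θ) 3).le
    have step1 : P / Q ^ 3 ≤ Mv c θ / (c + 2 * θ) ^ 3 :=
      div_le_div₀ hM0 hPhi (pow_pos (by linarith : (0:ℝ) < c + 2 * θ) 3)
        (pow_le_pow_left₀ (by linarith) hQlo 3)
    have step2 : (P / Q ^ 3) * y ^ (1 - 2 * c) ≤ (Mv c θ / (c + 2 * θ) ^ 3) * y ^ (1 - 2 * c) :=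
      mul_le_mul_of_nonneg_right step1 hylo
    have hKe : K ^ (2 - 1 / c) * K ^ e = 1 := by
      rw [← Real.rpow_add hK0, show 2 - 1 / c + e = 0 by simp only [hedef]; ring,
        Real.rpow_zero]
    have hKe0 : (0:ℝ) ≤ K ^ (2 - 1 / c) := (Real.rpow_pos_of_pos hK0 _).le
    have step3 : y ^ (1 - 2 * c) ≤ K ^ (2 - 1 / c) * (g c θ y) ^ e := by
      have hh := mul_le_mul_of_nonneg_left h_t_e_ge hKe0
      calc y ^ (1 - 2 * c) = K ^ (2 - 1 / c) * (K ^ e * y ^ (1 - 2 * c)) := by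
            rw [← mul_assoc, hKe, one_mul]
      _ ≤ K ^ (2 - 1 / c) * (g c θ y) ^ e := hh
    have step4 : (Mv c θ / (c + 2 * θ) ^ 3) * y ^ (1 - 2 * c)
        ≤ (Mv c θ / (c + 2 * θ) ^ 3) * (K ^ (2 - 1 / c) * (g c θ y) ^ e) :=
      mul_le_mul_of_nonneg_left step3 hMv0
    rw [hval]
    calc (P / Q ^ 3) * y ^ (1 - 2 * c)
        ≤ (Mv c θ / (c + 2 * θ) ^ 3) * (K ^ (2 - 1 / c) * (g c θ y) ^ e) :=
          le_trans step2 step4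
    _ = c2v c θ * (g c θ y) ^ e := by unfold c2v; rw [← hKdef]; ring

theorem stmt_5 (c θ : ℝ) (hc₁ : 1 < c) (hc₂ : c < 12 / 11) (hθ : 1 < θ)
    (m : ℝ → ℝ → ℝ)
    (hm : ∀ x : ℝ, 2 ≤ x → ∀ t ∈ Set.Icc (g c θ (Δ₁ x)) (g c θ (Δ₂ x)),
      m x t ∈ Set.Icc (Δ₁ x) (Δ₂ x) ∧ g c θ (m x t) = t) :
    ∃ c₁ c₂ : ℝ, 0 < c₁ ∧ c₁ ≤ c₂ ∧
      ∀ x : ℝ, 2 ≤ x → ∀ t ∈ Set.Ioo (g c θ (Δ₁ x)) (g c θ (Δ₂ x)),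
        (DifferentiableAt ℝ (m x) t ∧ DifferentiableAt ℝ (deriv (m x)) t) ∧
          c₁ * t ^ (1 / c - 2) ≤ |deriv (deriv (m x)) t| ∧
          |deriv (deriv (m x)) t| ≤ c₂ * t ^ (1 / c - 2) := by
  have hθ0 : (0:ℝ) < θ := by linarith
  have hK0 : (0:ℝ) < (2:ℝ) ^ θ := Real.rpow_pos_of_pos two_pos θ
  have hc1pos : 0 < c1v c θ := by
    unfold c1v
    exact div_pos (by linarith) (pow_pos (mul_pos hK0 (by linarith)) 3)
  refine ⟨c1v c θ, max (c1v c θ) (c2v c θ), hc1pos, le_max_left _ _, ?_⟩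
  intro x hx t ht
  have hgm := hm x hx
  have hfacts : ∀ z ∈ Set.Icc (Δ₁ x) (Δ₂ x),
      0 < z ∧ Real.cos (Real.log z) ≠ 0 ∧ 1 ≤ Real.tan (Real.log z) ∧
        Real.tan (Real.log z) ≤ 2 := fun z hz => tan_facts x hz
  have hgder : ∀ z ∈ Set.Icc (Δ₁ x) (Δ₂ x), HasDerivAt (g c θ) (g1 c θ z) z := by
    intro z hz
    obtain ⟨h0, h1, h2, _⟩ := hfacts z hz
    exact hasDerivAt_g_s5 c θ h0 h1 h2
  have hg1pos : ∀ z ∈ Set.Icc (Δ₁ x) (Δ₂ x), 0 < g1 c θ z := by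
    intro z hz
    obtain ⟨h0, h1, h2, h3⟩ := hfacts z hz
    have hb := (PQ_bounds c θ hc₁ hθ h2 h3).1
    exact mul_pos (Real.rpow_pos_of_pos h0 _) (by linarith)
  have hmono : StrictMonoOn (g c θ) (Set.Icc (Δ₁ x) (Δ₂ x)) := by
    apply strictMonoOn_of_deriv_pos (convex_Icc _ _)
    · intro z hz
      exact (hgder z hz).continuousAt.continuousWithinAt
    · intro z hz
      rw [interior_Icc] at hz
      rw [(hgder z (Set.Ioo_subset_Icc_self hz)).deriv]
      exact hg1pos z (Set.Ioo_subset_Icc_self hz)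
  have hIoo : ∀ s ∈ Set.Ioo (g c θ (Δ₁ x)) (g c θ (Δ₂ x)),
      m x s ∈ Set.Ioo (Δ₁ x) (Δ₂ x) ∧ g c θ (m x s) = s := by
    intro s hs
    obtain ⟨hmem, hgs⟩ := hgm s (Set.Ioo_subset_Icc_self hs)
    refine ⟨⟨?_, ?_⟩, hgs⟩
    · rcases eq_or_lt_of_le hmem.1 with h | h
      · exfalso
        rw [← h] at hgs
        rw [hgs] at hs
        exact lt_irrefl _ hs.1
      · exact h
    · rcases eq_or_lt_of_le hmem.2 with h | h
      · exfalso
        rw [h] at hgs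
        rw [hgs] at hs
        exact lt_irrefl _ hs.2
      · exact h
  have hcontm : ∀ s ∈ Set.Ioo (g c θ (Δ₁ x)) (g c θ (Δ₂ x)), ContinuousAt (m x) s := by
    intro s hs
    obtain ⟨hys, hgys⟩ := hIoo s hs
    rw [Metric.continuousAt_iff]
    intro ε hε
    set y := m x s with hydef
    set a : ℝ := max ((Δ₁ x + y) / 2) (y - ε / 2) with hadef
    set b : ℝ := min ((y + Δ₂ x) / 2) (y + ε / 2) with hbdef
    have ha1 : Δ₁ x < a := lt_max_iff.mpr (Or.inl (by
      have := hys.1; simp only [hydef] at this ⊢; linarith))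
    have ha2 : a < y := max_lt (by have := hys.1; linarith) (by linarith)
    have hb1 : y < b := lt_min (by have := hys.2; linarith) (by linarith)
    have hb2 : b < Δ₂ x := min_lt_iff.mpr (Or.inl (by have := hys.2; linarith))
    have haI : a ∈ Set.Icc (Δ₁ x) (Δ₂ x) := ⟨ha1.le, by linarith⟩
    have hbI : b ∈ Set.Icc (Δ₁ x) (Δ₂ x) := ⟨by linarith, hb2.le⟩
    have hyI : y ∈ Set.Icc (Δ₁ x) (Δ₂ x) := Set.Ioo_subset_Icc_self hys
    have hΔI1 : Δ₁ x ∈ Set.Icc (Δ₁ x) (Δ₂ x) := Set.left_mem_Icc.mpr (by linarith)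
    have hΔI2 : Δ₂ x ∈ Set.Icc (Δ₁ x) (Δ₂ x) := Set.right_mem_Icc.mpr (by linarith)
    have hga : g c θ a < s := by rw [← hgys]; exact hmono haI hyI ha2
    have hgb : s < g c θ b := by rw [← hgys]; exact hmono hyI hbI hb1
    obtain ⟨δ, hδ0, hδ⟩ := Metric.isOpen_iff.mp isOpen_Ioo s ⟨hga, hgb⟩
    refine ⟨δ, hδ0, ?_⟩
    intro u hu
    have huI : u ∈ Set.Ioo (g c θ a) (g c θ b) := hδ (Metric.mem_ball.mpr hu)
    have hu2 : u ∈ Set.Icc (g c θ (Δ₁ x)) (g c θ (Δ₂ x)) := by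
      constructor
      · exact le_trans (hmono.monotoneOn hΔI1 haI ha1.le) huI.1.le
      · exact le_trans huI.2.le (hmono.monotoneOn hbI hΔI2 hb2.le)
    obtain ⟨hmu, hgu⟩ := hgm u hu2
    have h1 : a < m x u := by
      by_contra h
      push_neg at h
      have hle := hmono.monotoneOn hmu haI h
      rw [hgu] at hle
      exact absurd huI.1 (not_lt.mpr hle)
    have h2 : m x u < b := by
      by_contra h
      push_neg at h
      have hle := hmono.monotoneOn hbI hmu h
      rw [hgu] at hle
      exact absurd huI.2 (not_lt.mpr hle)
    rw [Real.dist_eq, abs_lt]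
    have hma := le_max_right ((Δ₁ x + y) / 2) (y - ε / 2)
    have hmb := min_le_right ((y + Δ₂ x) / 2) (y + ε / 2)
    constructor <;> [skip; skip] <;> linarith
  have hev : ∀ s ∈ Set.Ioo (g c θ (Δ₁ x)) (g c θ (Δ₂ x)),
      ∀ᶠ u in nhds s, g c θ (m x u) = u := fun s hs =>
    (isOpen_Ioo.eventually_mem hs).mono (fun u hu => (hIoo u hu).2)
  have hm1 : ∀ s ∈ Set.Ioo (g c θ (Δ₁ x)) (g c θ (Δ₂ x)),
      HasDerivAt (m x) (g1 c θ (m x s))⁻¹ s := by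
    intro s hs
    obtain ⟨hmem, hgs⟩ := hIoo s hs
    have hder : HasDerivAt (g c θ) (g1 c θ (m x s)) (m x s) :=
      hgder _ (Set.Ioo_subset_Icc_self hmem)
    exact HasDerivAt.of_local_left_inverse (hcontm s hs) hder
      (ne_of_gt (hg1pos _ (Set.Ioo_subset_Icc_self hmem))) (hev s hs)
  obtain ⟨hmemt, hgmt⟩ := hIoo t ht
  have hmemt' := Set.Ioo_subset_Icc_self hmemt
  obtain ⟨hy0, hycos, hyT1, hyT2⟩ := hfacts _ hmemt'
  have hg1p := hg1pos _ hmemt'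
  have hm1t := hm1 t ht
  have hg1d : HasDerivAt (g1 c θ) (g2 c θ (m x t)) (m x t) :=
    hasDerivAt_g1 c θ hy0 hycos hyT1
  have hcomp : HasDerivAt (fun s => g1 c θ (m x s))
      (g2 c θ (m x t) * (g1 c θ (m x t))⁻¹) t := hg1d.comp t hm1t
  have hinv : HasDerivAt (fun s => (g1 c θ (m x s))⁻¹)
      (-(g2 c θ (m x t) * (g1 c θ (m x t))⁻¹) / (g1 c θ (m x t)) ^ 2) t :=
    hcomp.inv (ne_of_gt hg1p)
  have hevd : deriv (m x) =ᶠ[nhds t] fun s => (g1 c θ (m x s))⁻¹ :=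
    (isOpen_Ioo.eventually_mem ht).mono (fun s hs => (hm1 s hs).deriv)
  have hdiff2 : DifferentiableAt ℝ (deriv (m x)) t :=
    (hevd.differentiableAt_iff).mpr hinv.differentiableAt
  have hd2 : deriv (deriv (m x)) t
      = -(g2 c θ (m x t) * (g1 c θ (m x t))⁻¹) / (g1 c θ (m x t)) ^ 2 := by
    rw [hevd.deriv_eq]
    exact hinv.deriv
  have hg2p : 0 < g2 c θ (m x t) := by
    have hb := (PQ_bounds c θ hc₁ hθ hyT1 hyT2).2.2.1
    exact mul_pos (Real.rpow_pos_of_pos hy0 _) (by linarith)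
  have habs : |deriv (deriv (m x)) t| = g2 c θ (m x t) / (g1 c θ (m x t)) ^ 3 := by
    rw [hd2]
    have hne : g1 c θ (m x t) ≠ 0 := ne_of_gt hg1p
    have heq : -(g2 c θ (m x t) * (g1 c θ (m x t))⁻¹) / (g1 c θ (m x t)) ^ 2
        = -(g2 c θ (m x t) / (g1 c θ (m x t)) ^ 3) := by
      rw [← div_eq_mul_inv, neg_div, div_div, ← pow_succ']
    rw [heq, abs_neg, abs_of_pos (div_pos hg2p (pow_pos hg1p 3))]
  have hrb := ratio_bounds c θ hc₁ hθ hy0 hyT1 hyT2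
  have ht0 : 0 < t := by
    rw [← hgmt]
    have : 0 < Real.tan (Real.log (m x t)) ^ θ :=
      Real.rpow_pos_of_pos (by linarith) θ
    exact mul_pos (Real.rpow_pos_of_pos hy0 c) this
  rw [hgmt] at hrb
  refine ⟨⟨hm1t.differentiableAt, hdiff2⟩, ?_, ?_⟩
  · rw [habs]
    exact hrb.1
  · rw [habs]
    refine le_trans hrb.2 ?_
    exact mul_le_mul_of_nonneg_right (le_max_right _ _)
      (Real.rpow_pos_of_pos ht0 _).le
end

section
/- The inverse function m is three times differentiable on the open interval (g(Δ₁), g(Δ₂)), and there exist constants 0 < c₁ ≤ c₂ depending only on c and θ such that for every x ≥ 2 and every t in this interval, c₁·t^{γ−3} ≤ |m‴(t)| ≤ c₂·t^{γ−3}. -/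
open Real

set_option maxHeartbeats 1000000

namespace S6

noncomputable def T (y : ℝ) : ℝ := Real.tan (Real.log y)

lemma delta_lt (x : ℝ) : Δ₁ x < Δ₂ x := by
  apply Real.exp_lt_exp.2
  have : Real.arctan 1 < Real.arctan 2 := Real.arctan_strictMono (by norm_num)
  linarith

lemma delta_pos (x : ℝ) : 0 < Δ₁ x := Real.exp_pos _

/-- key point facts on the closed interval -/
lemma mem_facts {x y : ℝ} (hy : y ∈ Set.Icc (Δ₁ x) (Δ₂ x)) :
    0 < y ∧ T y ∈ Set.Icc (1:ℝ) 2 ∧ Real.cos (Real.log y) ≠ 0 := by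
  obtain ⟨h1, h2⟩ := hy
  have hypos : 0 < y := lt_of_lt_of_le (delta_pos x) h1
  set k : ℤ := ⌊Real.log x / Real.pi⌋ with hk
  have hl1 : Real.pi * k + Real.arctan 1 ≤ Real.log y := by
    have := Real.log_le_log (Real.exp_pos _) h1
    unfold Δ₁ at this; rwa [Real.log_exp] at this
  have hl2 : Real.log y ≤ Real.pi * k + Real.arctan 2 := by
    have := Real.log_le_log hypos h2
    unfold Δ₂ at this; rwa [Real.log_exp] at this
  set u : ℝ := Real.log y - k * Real.pi with hu
  have hu1 : Real.arctan 1 ≤ u := by rw [hu]; linarith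
  have hu2 : u ≤ Real.arctan 2 := by rw [hu]; linarith
  have hulo : Real.pi / 4 ≤ u := by rwa [← Real.arctan_one]
  have huhi : u < Real.pi / 2 := lt_of_le_of_lt hu2 (Real.arctan_lt_pi_div_two 2)
  have hu0 : 0 < u := lt_of_lt_of_le (by positivity) hulo
  have htan : T y = Real.tan u := by
    rw [T, hu, Real.tan_periodic.sub_int_mul_eq k]
  have humem : u ∈ Set.Ioo (-(Real.pi/2)) (Real.pi/2) := ⟨by linarith [Real.pi_pos], huhi⟩
  have ht1 : (1:ℝ) ≤ Real.tan u := by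
    have := Real.strictMonoOn_tan.monotoneOn (Real.arctan_mem_Ioo 1) humem hu1
    rwa [Real.tan_arctan] at this
  have ht2 : Real.tan u ≤ 2 := by
    have := Real.strictMonoOn_tan.monotoneOn humem (Real.arctan_mem_Ioo 2) hu2
    rwa [Real.tan_arctan] at this
  refine ⟨hypos, ⟨by rw [htan]; exact ht1, by rw [htan]; exact ht2⟩, ?_⟩
  intro hcos
  obtain ⟨n, hn⟩ := Real.cos_eq_zero_iff.1 hcos
  have hlogy : Real.log y = u + k * Real.pi := by rw [hu]; ring
  have : u = (2 * (n : ℝ) + 1 - 2 * k) * Real.pi / 2 := by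
    rw [hlogy] at hn; linarith
  set j : ℤ := 2 * n + 1 - 2 * k with hj
  have hje : u = (j : ℝ) * Real.pi / 2 := by rw [this]; push_cast [hj]; ring
  rcases le_or_gt 1 j with h | h
  · have : (1:ℝ) ≤ (j:ℝ) := by exact_mod_cast h
    nlinarith [Real.pi_pos]
  · have hj0 : j ≤ 0 := by omega
    have : (j:ℝ) ≤ 0 := by exact_mod_cast hj0
    nlinarith [Real.pi_pos]



noncomputable def A (c θ y : ℝ) : ℝ := c + θ * (T y + (T y)⁻¹)
noncomputable def sp (y : ℝ) : ℝ := (T y)^2 - ((T y)⁻¹)^2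
noncomputable def spp (y : ℝ) : ℝ := (1 + (T y)^2) * (2 * T y + 2 * ((T y)⁻¹)^3)
noncomputable def P (c θ y : ℝ) : ℝ := (A c θ y)^2 - A c θ y + θ * sp y
noncomputable def Pp (c θ y : ℝ) : ℝ := (2 * A c θ y - 1) * θ * sp y + θ * spp y
noncomputable def Q (c θ y : ℝ) : ℝ := A c θ y * P c θ y + Pp c θ y - 2 * P c θ y
noncomputable def G1 (c θ y : ℝ) : ℝ := y ^ (c-1) * T y ^ θ * A c θ y
noncomputable def G2 (c θ y : ℝ) : ℝ := y ^ (c-2) * T y ^ θ * P c θ y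
noncomputable def G3 (c θ y : ℝ) : ℝ := y ^ (c-3) * T y ^ θ * Q c θ y

variable {c θ y : ℝ}

lemma hasDerivAt_T (hy : 0 < y) (hc : Real.cos (Real.log y) ≠ 0) :
    HasDerivAt T ((1 + T y ^ 2) / y) y := by
  have h := (Real.hasDerivAt_tan hc).comp y (Real.hasDerivAt_log hy.ne')
  refine h.congr_deriv (Eq.symm ?_)
  have h2 := Real.inv_one_add_tan_sq hc
  have hc2 : Real.cos (Real.log y) ^ 2 ≠ 0 := pow_ne_zero _ hc
  rw [inv_eq_iff_eq_inv] at h2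
  rw [T, h2]
  rw [div_eq_mul_inv, one_div]

lemma hasDerivAt_A (hy : 0 < y) (hc : Real.cos (Real.log y) ≠ 0) (hT : T y ≠ 0) :
    HasDerivAt (A c θ) (θ * (1 - ((T y)⁻¹)^2) * ((1 + T y ^ 2) / y)) y := by
  have hT' := hasDerivAt_T hy hc
  have h := (hT'.add (hT'.inv hT)).const_mul θ |>.const_add c
  refine h.congr_deriv (Eq.symm ?_)
  field_simp
  ring

lemma hasDerivAt_g (hy : 0 < y) (hc : Real.cos (Real.log y) ≠ 0) (hT : 0 < T y) :
    HasDerivAt (g c θ) (G1 c θ y) y := by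
  have H1 : HasDerivAt (fun z : ℝ => z ^ c) (c * y ^ (c-1)) y :=
    Real.hasDerivAt_rpow_const (Or.inl hy.ne')
  have H3 := (hasDerivAt_T hy hc).rpow_const (p := θ) (Or.inl hT.ne')
  have h := H1.mul H3
  have hyc : y ^ c = y ^ (c-1) * y := by
    rw [← Real.rpow_add_one hy.ne' (c-1)]; congr 1; ring
  have hTc : T y ^ θ = T y ^ (θ-1) * T y := by
    rw [← Real.rpow_add_one hT.ne' (θ-1)]; congr 1; ring
  refine h.congr_deriv (Eq.symm ?_)
  rw [G1, A, hyc, hTc]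
  field_simp
  ring

lemma hasDerivAt_G1 (hy : 0 < y) (hc : Real.cos (Real.log y) ≠ 0) (hT : 0 < T y) :
    HasDerivAt (G1 c θ) (G2 c θ y) y := by
  have H1 : HasDerivAt (fun z : ℝ => z ^ (c-1)) ((c-1) * y ^ (c-1-1)) y :=
    Real.hasDerivAt_rpow_const (Or.inl hy.ne')
  have H3 := (hasDerivAt_T hy hc).rpow_const (p := θ) (Or.inl hT.ne')
  have h := (H1.mul H3).mul (hasDerivAt_A (c := c) (θ := θ) hy hc hT.ne')
  refine h.congr_deriv (Eq.symm ?_)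
  simp only [Pi.mul_apply]
  have hyc : y ^ (c-1) = y ^ (c-2) * y := by
    rw [← Real.rpow_add_one hy.ne' (c-2)]; congr 1; ring
  have hyc2 : y ^ (c-1-1) = y ^ (c-2) := by congr 1; ring
  have hTc : T y ^ θ = T y ^ (θ-1) * T y := by
    rw [← Real.rpow_add_one hT.ne' (θ-1)]; congr 1; ring
  rw [G2, P, A, sp, hyc, hyc2, hTc]
  field_simp
  ring

lemma hasDerivAt_G2 (hy : 0 < y) (hc : Real.cos (Real.log y) ≠ 0) (hT : 0 < T y) :
    HasDerivAt (G2 c θ) (G3 c θ y) y := by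
  have H1 : HasDerivAt (fun z : ℝ => z ^ (c-2)) ((c-2) * y ^ (c-2-1)) y :=
    Real.hasDerivAt_rpow_const (Or.inl hy.ne')
  have H3 := (hasDerivAt_T hy hc).rpow_const (p := θ) (Or.inl hT.ne')
  have hT' := hasDerivAt_T hy hc
  have hA := hasDerivAt_A (c := c) (θ := θ) hy hc hT.ne'
  have hsp : HasDerivAt sp ((2 * T y + 2 * ((T y)⁻¹)^3) * ((1 + T y ^ 2) / y)) y := by
    have h := (hT'.pow 2).sub ((hT'.inv hT.ne').pow 2)
    refine h.congr_deriv (Eq.symm ?_)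
    simp only [Pi.inv_apply, Nat.cast_ofNat, Nat.reduceSub, pow_one]
    field_simp
    ring
  have hP : HasDerivAt (P c θ)
      (((2 * A c θ y - 1) * (θ * (1 - ((T y)⁻¹)^2)) + θ * (2 * T y + 2 * ((T y)⁻¹)^3))
        * ((1 + T y ^ 2) / y)) y := by
    have h := ((hA.pow 2).sub hA).add (hsp.const_mul θ)
    refine h.congr_deriv (Eq.symm ?_)
    ring
  have h := (H1.mul H3).mul hP
  refine h.congr_deriv (Eq.symm ?_)
  simp only [Pi.mul_apply]
  have hyc : y ^ (c-2) = y ^ (c-3) * y := by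
    rw [← Real.rpow_add_one hy.ne' (c-3)]; congr 1; ring
  have hyc2 : y ^ (c-2-1) = y ^ (c-3) := by congr 1; ring
  have hTc : T y ^ θ = T y ^ (θ-1) * T y := by
    rw [← Real.rpow_add_one hT.ne' (θ-1)]; congr 1; ring
  rw [G3, Q, Pp, P, A, sp, spp, hyc, hyc2, hTc]
  field_simp
  ring

section inv

open Set

variable {c θ x y : ℝ}

lemma A_pos (hc₁ : 1 < c) (hθ : 1 < θ) (hT : 1 ≤ T y) : 0 < A c θ y := by
  have h0 : (0:ℝ) < T y := by linarith
  have h1 : 0 < T y + (T y)⁻¹ := by positivity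
  have : 0 < θ * (T y + (T y)⁻¹) := by positivity
  rw [A]; linarith

lemma G1_pos (hc₁ : 1 < c) (hθ : 1 < θ) (hy : 0 < y) (hT : 1 ≤ T y) : 0 < G1 c θ y := by
  have h0 : (0:ℝ) < T y := by linarith
  exact mul_pos (mul_pos (Real.rpow_pos_of_pos hy _) (Real.rpow_pos_of_pos h0 _))
    (A_pos hc₁ hθ hT)

lemma g_smono (hc₁ : 1 < c) (hθ : 1 < θ) :
    StrictMonoOn (g c θ) (Icc (Δ₁ x) (Δ₂ x)) := by
  apply strictMonoOn_of_deriv_pos (convex_Icc _ _)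
  · intro y hy
    obtain ⟨hy0, hT, hcos⟩ := mem_facts hy
    exact (hasDerivAt_g hy0 hcos (by linarith [hT.1])).continuousAt.continuousWithinAt
  · intro y hy
    rw [interior_Icc] at hy
    obtain ⟨hy0, hT, hcos⟩ := mem_facts (Ioo_subset_Icc_self hy)
    rw [(hasDerivAt_g hy0 hcos (by linarith [hT.1])).deriv]
    exact G1_pos hc₁ hθ hy0 hT.1

variable {M : ℝ → ℝ}

lemma M_mem (hc₁ : 1 < c) (hθ : 1 < θ)
    (hM : ∀ t ∈ Icc (g c θ (Δ₁ x)) (g c θ (Δ₂ x)), M t ∈ Icc (Δ₁ x) (Δ₂ x) ∧ g c θ (M t) = t)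
    {t : ℝ} (ht : t ∈ Ioo (g c θ (Δ₁ x)) (g c θ (Δ₂ x))) :
    M t ∈ Ioo (Δ₁ x) (Δ₂ x) := by
  obtain ⟨hmem, heq⟩ := hM t (Ioo_subset_Icc_self ht)
  constructor
  · rcases lt_or_eq_of_le hmem.1 with h | h
    · exact h
    · exfalso; rw [← h] at heq; rw [heq] at ht; exact lt_irrefl _ ht.1
  · rcases lt_or_eq_of_le hmem.2 with h | h
    · exact h
    · exfalso; rw [h] at heq; rw [heq] at ht; exact lt_irrefl _ ht.2

lemma M_cont (hc₁ : 1 < c) (hθ : 1 < θ)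
    (hM : ∀ t ∈ Icc (g c θ (Δ₁ x)) (g c θ (Δ₂ x)), M t ∈ Icc (Δ₁ x) (Δ₂ x) ∧ g c θ (M t) = t)
    {t : ℝ} (ht : t ∈ Ioo (g c θ (Δ₁ x)) (g c θ (Δ₂ x))) :
    ContinuousAt M t := by
  have hsm := g_smono (x := x) hc₁ hθ
  have hmono := hsm.monotoneOn
  have hmm := M_mem hc₁ hθ hM ht
  rw [ContinuousAt]
  apply tendsto_order.2
  constructor
  · intro a ha
    rcases lt_or_ge a (Δ₁ x) with h | h
    · filter_upwards [(isOpen_Ioo).mem_nhds ht] with z hz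
      exact lt_of_lt_of_le h (hM z (Ioo_subset_Icc_self hz)).1.1
    · -- a ∈ [Δ₁, M t) ⊆ Icc
      have haI : a ∈ Icc (Δ₁ x) (Δ₂ x) := ⟨h, le_of_lt (lt_of_lt_of_le ha (hM t (Ioo_subset_Icc_self ht)).1.2)⟩
      have hga : g c θ a < t := by
        have := hsm haI (hM t (Ioo_subset_Icc_self ht)).1 ha
        rwa [(hM t (Ioo_subset_Icc_self ht)).2] at this
      filter_upwards [(isOpen_Ioo).mem_nhds (show t ∈ Ioo (g c θ a) (g c θ (Δ₂ x)) from ⟨hga, ht.2⟩),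
        (isOpen_Ioo).mem_nhds ht] with z hz hz2
      by_contra hcon
      push_neg at hcon
      have := hmono (hM z (Ioo_subset_Icc_self hz2)).1 haI hcon
      rw [(hM z (Ioo_subset_Icc_self hz2)).2] at this
      exact absurd hz.1 (not_lt.2 this)
  · intro b hb
    rcases le_or_gt b (Δ₂ x) with h | h
    · have hbI : b ∈ Icc (Δ₁ x) (Δ₂ x) := ⟨le_of_lt (lt_of_le_of_lt (hM t (Ioo_subset_Icc_self ht)).1.1 hb), h⟩
      have hgb : t < g c θ b := by
        have := hsm (hM t (Ioo_subset_Icc_self ht)).1 hbI hb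
        rwa [(hM t (Ioo_subset_Icc_self ht)).2] at this
      filter_upwards [(isOpen_Ioo).mem_nhds (show t ∈ Ioo (g c θ (Δ₁ x)) (g c θ b) from ⟨ht.1, hgb⟩),
        (isOpen_Ioo).mem_nhds ht] with z hz hz2
      by_contra hcon
      push_neg at hcon
      have := hmono hbI (hM z (Ioo_subset_Icc_self hz2)).1 hcon
      rw [(hM z (Ioo_subset_Icc_self hz2)).2] at this
      exact absurd hz.2 (not_lt.2 this)
    · filter_upwards [(isOpen_Ioo).mem_nhds ht] with z hz
      exact lt_of_le_of_lt (hM z (Ioo_subset_Icc_self hz)).1.2 h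

lemma M_d1 (hc₁ : 1 < c) (hθ : 1 < θ)
    (hM : ∀ t ∈ Icc (g c θ (Δ₁ x)) (g c θ (Δ₂ x)), M t ∈ Icc (Δ₁ x) (Δ₂ x) ∧ g c θ (M t) = t)
    {t : ℝ} (ht : t ∈ Ioo (g c θ (Δ₁ x)) (g c θ (Δ₂ x))) :
    HasDerivAt M (G1 c θ (M t))⁻¹ t := by
  obtain ⟨hy0, hT, hcos⟩ := mem_facts (hM t (Ioo_subset_Icc_self ht)).1
  apply HasDerivAt.of_local_left_inverse (M_cont hc₁ hθ hM ht)
    (hasDerivAt_g hy0 hcos (by linarith [hT.1]))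
    (ne_of_gt (G1_pos hc₁ hθ hy0 hT.1))
  filter_upwards [(isOpen_Ioo).mem_nhds ht] with z hz
  exact (hM z (Ioo_subset_Icc_self hz)).2

lemma M_d2 (hc₁ : 1 < c) (hθ : 1 < θ)
    (hM : ∀ t ∈ Icc (g c θ (Δ₁ x)) (g c θ (Δ₂ x)), M t ∈ Icc (Δ₁ x) (Δ₂ x) ∧ g c θ (M t) = t)
    {t : ℝ} (ht : t ∈ Ioo (g c θ (Δ₁ x)) (g c θ (Δ₂ x))) :
    HasDerivAt (deriv M) (-(G2 c θ (M t)) / (G1 c θ (M t))^3) t := by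
  obtain ⟨hy0, hT, hcos⟩ := mem_facts (hM t (Ioo_subset_Icc_self ht)).1
  have hG1 := G1_pos (y := M t) hc₁ hθ hy0 hT.1
  have h1 : HasDerivAt (fun z => (G1 c θ (M z))⁻¹)
      (-(G2 c θ (M t) * (G1 c θ (M t))⁻¹) / (G1 c θ (M t))^2) t := by
    exact (((hasDerivAt_G1 hy0 hcos (by linarith [hT.1])).comp t
      (M_d1 hc₁ hθ hM ht)).inv hG1.ne')
  have h2 : (deriv M) =ᶠ[nhds t] (fun z => (G1 c θ (M z))⁻¹) := by
    filter_upwards [(isOpen_Ioo).mem_nhds ht] with z hz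
    exact (M_d1 hc₁ hθ hM hz).deriv
  have h3 := h1.congr_of_eventuallyEq h2
  refine h3.congr_deriv (Eq.symm ?_)
  rw [div_eq_div_iff (by positivity) (by positivity)]
  field_simp

lemma M_d3 (hc₁ : 1 < c) (hθ : 1 < θ)
    (hM : ∀ t ∈ Icc (g c θ (Δ₁ x)) (g c θ (Δ₂ x)), M t ∈ Icc (Δ₁ x) (Δ₂ x) ∧ g c θ (M t) = t)
    {t : ℝ} (ht : t ∈ Ioo (g c θ (Δ₁ x)) (g c θ (Δ₂ x))) :
    HasDerivAt (deriv (deriv M))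
      ((3 * (G2 c θ (M t))^2 - G1 c θ (M t) * G3 c θ (M t)) / (G1 c θ (M t))^5) t := by
  obtain ⟨hy0, hT, hcos⟩ := mem_facts (hM t (Ioo_subset_Icc_self ht)).1
  have hG1 := G1_pos (y := M t) hc₁ hθ hy0 hT.1
  have hd1 := M_d1 hc₁ hθ hM ht
  have hnum : HasDerivAt (fun z => -(G2 c θ (M z)))
      (-(G3 c θ (M t) * (G1 c θ (M t))⁻¹)) t :=
    ((hasDerivAt_G2 hy0 hcos (by linarith [hT.1])).comp t hd1).neg
  have hden : HasDerivAt (fun z => (G1 c θ (M z))^3)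
      (3 * (G1 c θ (M t))^2 * (G2 c θ (M t) * (G1 c θ (M t))⁻¹)) t := by
    have := ((hasDerivAt_G1 (c := c) (θ := θ) hy0 hcos (by linarith [hT.1])).comp t hd1).pow 3
    refine this.congr_deriv (Eq.symm ?_); simp only [Function.comp_apply]; ring
  have h1 := hnum.div hden (by positivity)
  have h2 : (deriv (deriv M)) =ᶠ[nhds t] (fun z => -(G2 c θ (M z)) / (G1 c θ (M z))^3) := by
    filter_upwards [(isOpen_Ioo).mem_nhds ht] with z hz
    exact (M_d2 hc₁ hθ hM hz).deriv
  have h3 := h1.congr_of_eventuallyEq h2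
  refine h3.congr_deriv (Eq.symm ?_)
  field_simp
  ring

end inv

section bounds

open Set

variable {c θ x y : ℝ}

noncomputable def EE (c θ y : ℝ) : ℝ := 3 * (P c θ y)^2 - A c θ y * Q c θ y

lemma g_pos (hy : 0 < y) (hT0 : 0 < T y) : 0 < g c θ y := by
  rw [g]
  have h1 : (0:ℝ) < y ^ c := Real.rpow_pos_of_pos hy c
  have h2 : (0:ℝ) < Real.tan (Real.log y) ^ θ := Real.rpow_pos_of_pos hT0 θ
  exact mul_pos h1 h2

lemma val_eq (hc₁ : 1 < c) (hθ : 1 < θ) (hy : 0 < y) (hT0 : 0 < T y) (hT1 : 1 ≤ T y) :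
    (3 * (G2 c θ y)^2 - G1 c θ y * G3 c θ y) / (G1 c θ y)^5
      = EE c θ y / ((A c θ y)^5 * (T y) ^ (θ * (1/c))) * (g c θ y) ^ (1/c - 3) := by
  have hc0 : c ≠ 0 := by linarith
  have hW : 0 < T y ^ θ := Real.rpow_pos_of_pos hT0 θ
  have hS : 0 < T y ^ (θ * (1/c)) := Real.rpow_pos_of_pos hT0 _
  have ha : 0 < y ^ (c-3) := Real.rpow_pos_of_pos hy _
  have e1 : y ^ (c-1) = y ^ (c-3) * y * y := by
    rw [← Real.rpow_add_one hy.ne' (c-3), ← Real.rpow_add_one hy.ne' (c-3+1)]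
    congr 1; ring
  have e2 : y ^ (c-2) = y ^ (c-3) * y := by
    rw [← Real.rpow_add_one hy.ne' (c-3)]
    congr 1; ring
  have e3 : y ^ (3*c-1) = (y ^ (c-3))^3 * y^8 := by
    rw [← Real.rpow_natCast (y ^ (c-3)) 3, ← Real.rpow_mul hy.le,
      ← Real.rpow_natCast y 8, ← Real.rpow_add hy]
    congr 1; push_cast; ring
  have f4 : (g c θ y) ^ (1/c - 3) = T y ^ (θ * (1/c)) / (y ^ (3*c-1) * (T y ^ θ)^3) := by
    rw [eq_div_iff (by positivity)]
    rw [show g c θ y = y ^ c * T y ^ θ from rfl, Real.mul_rpow (Real.rpow_pos_of_pos hy c).le hW.le]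
    rw [← Real.rpow_natCast (T y ^ θ) 3, ← Real.rpow_mul hT0.le, ← Real.rpow_mul hy.le,
      ← Real.rpow_mul hT0.le]
    have hyy : y ^ (c * (1/c - 3)) * y ^ (3*c-1) = 1 := by
      rw [← Real.rpow_add hy]
      rw [show c * (1/c - 3) + (3*c-1) = 0 by field_simp; ring]
      exact Real.rpow_zero y
    have hTT : T y ^ (θ * (1/c - 3)) * T y ^ (θ * 3) = T y ^ (θ * (1/c)) := by
      rw [← Real.rpow_add hT0]
      congr 1; ring
    push_cast
    calc y ^ (c * (1/c - 3)) * T y ^ (θ * (1/c - 3)) * (y ^ (3*c-1) * T y ^ (θ * 3))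
        = (y ^ (c * (1/c - 3)) * y ^ (3*c-1)) * (T y ^ (θ * (1/c - 3)) * T y ^ (θ * 3)) := by ring
      _ = 1 * T y ^ (θ * (1/c)) := by rw [hyy, hTT]
      _ = T y ^ (θ * (1/c)) := one_mul _
  rw [G1, G2, G3, EE, f4, e1, e2, e3]
  have hApos := A_pos (y := y) hc₁ hθ hT1
  field_simp

lemma EE_lower_aux (θ a s1 s2 : ℝ) (hθ : 1 ≤ θ) (hA : 1 + 2*θ ≤ a)
    (hs1 : 0 ≤ s1) (hs2' : s2 ≤ 24) :
    9 ≤ 2*a^4 - 3*a^3 + a^2 + 3*a^2*θ*s1 - 3*a*θ*s1 + 3*θ^2*s1^2 - a*θ*s2 := by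
  have ha3 : 3 ≤ a := by linarith
  have ha0 : 0 ≤ a := by linarith
  have hθ0 : (0:ℝ) ≤ θ := by linarith
  have h1 : 0 ≤ 3*a*θ*s1*(a-1) :=
    mul_nonneg (mul_nonneg (mul_nonneg (by linarith) hθ0) hs1) (by linarith)
  have h2 : 0 ≤ a*θ*(24-s2) := mul_nonneg (mul_nonneg ha0 hθ0) (by linarith)
  have h3 : 0 ≤ 2*a^3*(a-3) :=
    mul_nonneg (mul_nonneg (by norm_num) (pow_nonneg ha0 3)) (by linarith)
  have h4 : 0 ≤ 3*a*((a-(1+2*θ))*(a+(1+2*θ))) :=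
    mul_nonneg (by linarith) (mul_nonneg (by linarith) (by linarith))
  have h5 : 0 ≤ 3*(a-3)*(2*θ-1)^2 :=
    mul_nonneg (by linarith) (sq_nonneg _)
  have h6 : 0 ≤ 3*θ^2*s1^2 := by positivity
  have h7 : 0 ≤ a^2 := sq_nonneg a
  have h8 : (1:ℝ) ≤ (2*θ-1)^2 := by nlinarith
  nlinarith [h1, h2, h3, h4, h5, h6, h7, h8]

lemma EE_upper_aux (θ a p q : ℝ) (hθ : 1 ≤ θ) (ha0 : 0 ≤ a) (haK : a ≤ 2+3*θ)
    (hp0 : 0 ≤ p) (hpb : p ≤ (2+3*θ)^2 + 4*θ) (hq : -(2*p) ≤ q) :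
    3*p^2 - a*q ≤ 3*((2+3*θ)^2 + 4*θ)^2 + 2*(2+3*θ)*((2+3*θ)^2 + 4*θ) := by
  have hK0 : (0:ℝ) ≤ 2+3*θ := by linarith
  have h1 : -(a*q) ≤ 2*(a*p) := by nlinarith
  have h2 : a*p ≤ (2+3*θ)*((2+3*θ)^2 + 4*θ) := by nlinarith
  nlinarith

lemma EE_bounds (hc₁ : 1 < c) (hc₂ : c < 12/11) (hθ : 1 < θ) (hT : T y ∈ Icc (1:ℝ) 2) :
    9 ≤ EE c θ y ∧
      EE c θ y ≤ 3 * ((2+3*θ)^2 + 4*θ)^2 + 2 * (2+3*θ) * ((2+3*θ)^2 + 4*θ) := by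
  obtain ⟨hv1, hv2⟩ := hT
  set v := T y with hv
  have hv0 : (0:ℝ) < v := by linarith
  have hw0 : (0:ℝ) < v⁻¹ := by positivity
  have hvw : v * v⁻¹ = 1 := mul_inv_cancel₀ hv0.ne'
  have hwi : v⁻¹ ≤ 1 := by nlinarith
  have hθ0 : (0:ℝ) < θ := by linarith
  have hsp0 : 0 ≤ sp y := by rw [sp, ← hv]; nlinarith
  have hsp4 : sp y ≤ 4 := by rw [sp, ← hv]; nlinarith
  have hsppE : spp y = 2*v + 2*v^3 + 2*v⁻¹ + 2*(v⁻¹)^3 := by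
    rw [spp, ← hv]; field_simp; ring
  have hspp0 : 0 ≤ spp y := by
    rw [hsppE]; nlinarith [pow_pos hv0 3, pow_pos hw0 3]
  have hspp24 : spp y ≤ 24 := by
    rw [hsppE]
    nlinarith [pow_le_pow_left₀ hv0.le hv2 3, pow_le_pow_left₀ hw0.le hwi 3]
  have hs2 : 2 ≤ v + v⁻¹ := by nlinarith [mul_nonneg (sq_nonneg (v-1)) hw0.le]
  have hs3 : v + v⁻¹ ≤ 3 := by linarith
  have hAe : A c θ y = c + θ * (v + v⁻¹) := by rw [A, ← hv]
  have hA_lb : 1 + 2*θ ≤ A c θ y := by rw [hAe]; nlinarith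
  have hA_ub : A c θ y ≤ 2 + 3*θ := by rw [hAe]; nlinarith
  have ha0 : 0 ≤ A c θ y := by linarith
  have hEE : EE c θ y = 2*(A c θ y)^4 - 3*(A c θ y)^3 + (A c θ y)^2
      + 3*(A c θ y)^2*θ*(sp y) - 3*(A c θ y)*θ*(sp y)
      + 3*θ^2*(sp y)^2 - (A c θ y)*θ*(spp y) := by
    rw [EE, Q, Pp, P]; ring
  constructor
  · rw [hEE]
    exact EE_lower_aux θ (A c θ y) (sp y) (spp y) hθ.le hA_lb hsp0 hspp24
  · have hP0 : 0 ≤ P c θ y := by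
      rw [P]
      nlinarith [mul_nonneg ha0 (by linarith : (0:ℝ) ≤ A c θ y - 1),
        mul_nonneg hθ0.le hsp0]
    have hPub : P c θ y ≤ (2+3*θ)^2 + 4*θ := by
      rw [P]
      have hsq : (A c θ y)^2 ≤ (2+3*θ)^2 := pow_le_pow_left₀ ha0 hA_ub 2
      nlinarith [mul_nonneg hθ0.le hsp0]
    have hPp0 : 0 ≤ Pp c θ y := by
      rw [Pp]
      exact add_nonneg (mul_nonneg (mul_nonneg (by linarith) hθ0.le) hsp0)
        (mul_nonneg hθ0.le hspp0)
    have hQ : -(2 * P c θ y) ≤ Q c θ y := by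
      rw [Q]
      linarith [mul_nonneg ha0 hP0, hPp0]
    rw [EE]
    exact EE_upper_aux θ (A c θ y) (P c θ y) (Q c θ y) hθ.le ha0 hA_ub hP0 hPub hQ

end bounds

open Set

lemma A_ub (hc₂ : c < 12/11) (hθ : 1 < θ) (hT : T y ∈ Icc (1:ℝ) 2) :
    A c θ y ≤ 2 + 3*θ := by
  obtain ⟨hv1, hv2⟩ := hT
  have hv0 : (0:ℝ) < T y := by linarith
  have hw0 : (0:ℝ) < (T y)⁻¹ := by positivity
  have hvw : T y * (T y)⁻¹ = 1 := mul_inv_cancel₀ hv0.ne'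
  have hwi : (T y)⁻¹ ≤ 1 := by nlinarith
  rw [A]
  nlinarith

lemma val_bound (hc₁ : 1 < c) (hc₂ : c < 12/11) (hθ : 1 < θ) (hy : 0 < y)
    (hT : T y ∈ Icc (1:ℝ) 2) :
    9 / ((2+3*θ)^5 * (2:ℝ)^θ) * (g c θ y) ^ (1/c - 3)
      ≤ |(3 * (G2 c θ y)^2 - G1 c θ y * G3 c θ y) / (G1 c θ y)^5| ∧
    |(3 * (G2 c θ y)^2 - G1 c θ y * G3 c θ y) / (G1 c θ y)^5|
      ≤ (3*((2+3*θ)^2+4*θ)^2 + 2*(2+3*θ)*((2+3*θ)^2+4*θ)) * (g c θ y) ^ (1/c - 3) := by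
  have hT0 : 0 < T y := by linarith [hT.1]
  have hE := EE_bounds hc₁ hc₂ hθ hT
  have hveq := val_eq (θ := θ) hc₁ hθ hy hT0 hT.1
  have hS0 : 0 < T y ^ (θ*(1/c)) := Real.rpow_pos_of_pos hT0 _
  have hS1 : 1 ≤ T y ^ (θ*(1/c)) := by
    calc (1:ℝ) = 1 ^ (θ*(1/c)) := (Real.one_rpow _).symm
      _ ≤ T y ^ (θ*(1/c)) := Real.rpow_le_rpow (by norm_num) hT.1 (by positivity)
  have hc0 : (0:ℝ) < c := by linarith
  have hS2 : T y ^ (θ*(1/c)) ≤ (2:ℝ)^θ := by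
    have h1 : θ*(1/c) ≤ θ := by
      have : 1/c ≤ 1 := by rw [div_le_one hc0]; linarith
      nlinarith
    calc T y ^ (θ*(1/c)) ≤ (2:ℝ) ^ (θ*(1/c)) :=
          Real.rpow_le_rpow hT0.le hT.2 (by positivity)
      _ ≤ (2:ℝ)^θ := Real.rpow_le_rpow_of_exponent_le one_le_two h1
  have hApos := A_pos (y := y) hc₁ hθ hT.1
  have hAub := A_ub (y := y) hc₂ hθ hT
  have hden0 : 0 < (A c θ y)^5 * T y ^ (θ*(1/c)) := by positivity
  have hdenub : (A c θ y)^5 * T y ^ (θ*(1/c)) ≤ (2+3*θ)^5 * (2:ℝ)^θ := by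
    apply mul_le_mul (pow_le_pow_left₀ hApos.le hAub 5) hS2 hS0.le (by positivity)
  have hgpow : 0 < (g c θ y) ^ (1/c - 3) :=
    Real.rpow_pos_of_pos (g_pos hy hT0) _
  have hF0 : 0 < EE c θ y / ((A c θ y)^5 * T y ^ (θ*(1/c))) :=
    div_pos (by linarith [hE.1]) hden0
  have habs : |(3 * (G2 c θ y)^2 - G1 c θ y * G3 c θ y) / (G1 c θ y)^5|
      = EE c θ y / ((A c θ y)^5 * T y ^ (θ*(1/c))) * (g c θ y) ^ (1/c - 3) := by
    rw [hveq]; exact abs_of_pos (mul_pos hF0 hgpow)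
  rw [habs]
  constructor
  · apply mul_le_mul_of_nonneg_right _ hgpow.le
    exact div_le_div₀ (by linarith [hE.1]) (by linarith [hE.1]) hden0 hdenub
  · apply mul_le_mul_of_nonneg_right _ hgpow.le
    have h15 : 1 ≤ (A c θ y)^5 * T y ^ (θ*(1/c)) := by
      have hA1 : 1 ≤ A c θ y := by
        rw [A]
        have h2 : 0 < T y + (T y)⁻¹ := by positivity
        nlinarith
      have h5 : (1:ℝ)^5 ≤ (A c θ y)^5 := pow_le_pow_left₀ (by norm_num) hA1 5
      rw [one_pow] at h5
      nlinarith
    have : EE c θ y / ((A c θ y)^5 * T y ^ (θ*(1/c))) ≤ EE c θ y := by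
      rw [div_le_iff₀ hden0]
      nlinarith [hE.1]
    linarith [hE.2]

end S6

theorem stmt_6 (c θ : ℝ) (hc₁ : 1 < c) (hc₂ : c < 12 / 11) (hθ : 1 < θ)
    (m : ℝ → ℝ → ℝ)
    (hm : ∀ x : ℝ, 2 ≤ x → ∀ t ∈ Set.Icc (g c θ (Δ₁ x)) (g c θ (Δ₂ x)),
      m x t ∈ Set.Icc (Δ₁ x) (Δ₂ x) ∧ g c θ (m x t) = t) :
    ∃ c₁ c₂ : ℝ, 0 < c₁ ∧ c₁ ≤ c₂ ∧
      ∀ x : ℝ, 2 ≤ x → ∀ t ∈ Set.Ioo (g c θ (Δ₁ x)) (g c θ (Δ₂ x)),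
        (DifferentiableAt ℝ (m x) t ∧ DifferentiableAt ℝ (deriv (m x)) t ∧
            DifferentiableAt ℝ (deriv (deriv (m x))) t) ∧
          c₁ * t ^ (1 / c - 3) ≤ |deriv (deriv (deriv (m x))) t| ∧
          |deriv (deriv (deriv (m x))) t| ≤ c₂ * t ^ (1 / c - 3) := by
  refine ⟨9 / ((2+3*θ)^5 * (2:ℝ)^θ),
    max (9 / ((2+3*θ)^5 * (2:ℝ)^θ)) (3*((2+3*θ)^2+4*θ)^2 + 2*(2+3*θ)*((2+3*θ)^2+4*θ)),
    ?_, le_max_left _ _, ?_⟩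
  · have hK : (0:ℝ) < 2+3*θ := by linarith
    exact div_pos (by norm_num) (mul_pos (pow_pos hK 5) (Real.rpow_pos_of_pos two_pos θ))
  intro x hx t ht
  have hM := hm x hx
  obtain ⟨hy0, hT, hcos⟩ := S6.mem_facts (hM t (Set.Ioo_subset_Icc_self ht)).1
  have heq : g c θ (m x t) = t := (hM t (Set.Ioo_subset_Icc_self ht)).2
  have hd1 := S6.M_d1 hc₁ hθ hM ht
  have hd2 := S6.M_d2 hc₁ hθ hM ht
  have hd3 := S6.M_d3 hc₁ hθ hM ht
  have hvb := S6.val_bound (y := m x t) hc₁ hc₂ hθ hy0 hT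
  refine ⟨⟨hd1.differentiableAt, hd2.differentiableAt, hd3.differentiableAt⟩, ?_, ?_⟩
  · rw [hd3.deriv]
    conv_lhs => rw [← heq]
    exact hvb.1
  · rw [hd3.deriv]
    conv_rhs => rw [← heq]
    have hgpow : 0 ≤ (g c θ (m x t)) ^ (1/c - 3) :=
      (Real.rpow_pos_of_pos (S6.g_pos hy0 (by linarith [hT.1])) _).le
    refine le_trans hvb.2 (mul_le_mul_of_nonneg_right (le_max_right _ _) hgpow)
end

section
/- Let X > 0, let I be a subinterval of (X, 2X], let Q be a positive integer, and let z : ℤ → ℂ. Then |Σ_{n ∈ I} z(n)|² ≤ (1 + X/Q) · Σ_{|q| < Q} (1 − |q|/Q) · Σ_{n : n ∈ I and n+q ∈ I} z(n+q)·conj(z(n)), where n and q run over integers in the indicated ranges (in particular the right-hand side is a nonnegative real number). -/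
open Real
open scoped ComplexOrder

lemma fiber_card (Q : ℕ) (q : ℤ) (hq : q.natAbs < Q) :
    ((Finset.range Q ×ˢ Finset.range Q).filter
      (fun p : ℕ × ℕ => (p.1 : ℤ) - p.2 = q)).card = Q - q.natAbs := by
  rw [← Finset.card_range (Q - q.natAbs)]
  apply Finset.card_bij' (fun p _ => min p.1 p.2)
      (fun k _ => (k + q.toNat, k + (-q).toNat))
  · intro p hp
    simp only [Finset.mem_filter, Finset.mem_product, Finset.mem_range] at hp ⊢
    omega
  · intro k hk
    simp only [Finset.mem_filter, Finset.mem_product, Finset.mem_range] at hk ⊢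
    omega
  · intro p hp
    simp only [Finset.mem_filter, Finset.mem_product, Finset.mem_range] at hp
    ext <;> simp <;> omega
  · intro k hk
    simp at *
    omega

theorem stmt_17 (X : ℝ) (hX : 0 < X) (I : Set ℝ) (hI : I ⊆ Set.Ioc X (2 * X))
    (hI' : I.OrdConnected) (Q : ℕ) (hQ : 0 < Q) (z : ℤ → ℂ) :
    ((‖∑ᶠ n ∈ {n : ℤ | (n : ℝ) ∈ I}, z n‖ ^ 2 : ℝ) : ℂ) ≤
      ((1 + X / (Q : ℝ) : ℝ) : ℂ) *
        ∑ᶠ q ∈ {q : ℤ | |q| < (Q : ℤ)},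
          ((1 - (|q| : ℝ) / (Q : ℝ) : ℝ) : ℂ) *
            ∑ᶠ n ∈ {n : ℤ | (n : ℝ) ∈ I ∧ ((n + q : ℤ) : ℝ) ∈ I},
              z (n + q) * (starRingEnd ℂ) (z n) := by
  classical
  have hQR : (0:ℝ) < (Q:ℝ) := by exact_mod_cast hQ
  -- the integer points of I form a finite set
  have hfin : {n : ℤ | (n : ℝ) ∈ I}.Finite := by
    apply Set.Finite.subset (Set.finite_Icc (⌊X⌋ + 1) ⌊2*X⌋)
    intro n hn
    have h2 := hI hn
    simp only [Set.mem_Ioc] at h2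
    simp only [Set.mem_Icc]
    constructor
    · have : (⌊X⌋ : ℝ) < (n:ℝ) := lt_of_le_of_lt (Int.floor_le X) h2.1
      have : ⌊X⌋ < n := by exact_mod_cast this
      omega
    · exact Int.le_floor.mpr h2.2
  set T : Finset ℤ := hfin.toFinset with hT
  have hmemT : ∀ n : ℤ, n ∈ T ↔ (n : ℝ) ∈ I := fun n => hfin.mem_toFinset
  -- rewrite the finsums as Finset sums
  have hLHS : ∑ᶠ n ∈ {n : ℤ | (n : ℝ) ∈ I}, z n = ∑ n ∈ T, z n := by
    rw [← hfin.coe_toFinset, finsum_mem_coe_finset]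
  set D : ℤ → ℂ := fun q => ∑ n ∈ T.filter (fun n => n + q ∈ T),
      z (n + q) * (starRingEnd ℂ) (z n) with hD
  have hinner : ∀ q : ℤ,
      (∑ᶠ n ∈ {n : ℤ | (n : ℝ) ∈ I ∧ ((n + q : ℤ) : ℝ) ∈ I},
        z (n + q) * (starRingEnd ℂ) (z n)) = D q := by
    intro q
    have hset : {n : ℤ | (n : ℝ) ∈ I ∧ ((n + q : ℤ) : ℝ) ∈ I}
        = ↑(T.filter (fun n => n + q ∈ T)) := by
      ext n
      simp only [Set.mem_setOf_eq, Finset.coe_filter, hmemT]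
    rw [hset, finsum_mem_coe_finset]
  have hqset : {q : ℤ | |q| < (Q : ℤ)} = ↑(Finset.Ioo (-(Q:ℤ)) (Q:ℤ)) := by
    ext q; simp [abs_lt]
  rw [hLHS, hqset, finsum_mem_coe_finset]
  simp only [hinner]
  -- dispose of the empty case
  rcases T.eq_empty_or_nonempty with hTe | hne
  · simp only [hD, hTe, Finset.filter_empty, Finset.sum_empty, mul_zero,
      Finset.sum_const_zero, Finset.sum_empty, map_zero]
    simp
  -- setup
  set a : ℤ := T.min' hne
  set b : ℤ := T.max' hne
  set A : Finset ℤ := Finset.Icc (a - Q + 1) b with hA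
  set f : ℤ → ℂ := fun n => if n ∈ T then z n else 0 with hf
  have hfsum : ∀ s : Finset ℤ, T ⊆ s → ∑ n ∈ s, f n = ∑ n ∈ T, z n := by
    intro s hs
    rw [← Finset.sum_subset hs (fun x _ hx => by simp [hf, hx])]
    exact Finset.sum_congr rfl fun x hx => by simp [hf, hx]
  set w : ℤ → ℂ := fun m => ∑ j ∈ Finset.range Q, f (m + j) with hw
  have hab : a ≤ b := T.min'_le b (T.max'_mem hne)
  -- Claim 1 : ∑ m ∈ A, w m = Q • S
  have hclaim1 : ∑ m ∈ A, w m = Q • (∑ n ∈ T, z n) := by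
    rw [hw, Finset.sum_comm]
    have hj : ∀ j ∈ Finset.range Q, (∑ m ∈ A, f (m + (j:ℤ))) = ∑ n ∈ T, z n := by
      intro j hj
      have hjQ : j < Q := Finset.mem_range.mp hj
      have h0 : ∑ m ∈ A, f (m + (j:ℤ)) = ∑ n ∈ A.map (addRightEmbedding (j:ℤ)), f n := by
        rw [Finset.sum_map]; rfl
      rw [h0, hA, Finset.map_add_right_Icc]
      apply hfsum
      intro n hn
      have h1 : a ≤ n := T.min'_le n hn
      have h2 : n ≤ b := T.le_max' n hn
      rw [Finset.mem_Icc]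
      omega
    rw [Finset.sum_congr rfl hj, Finset.sum_const, Finset.card_range]
  -- Claim 2 : expansion  ∑ m ∈ A, w m * conj (w m) = ∑ q, (Q - |q|) • D q
  have hinner2 : ∀ j k : ℕ, j < Q → k < Q →
      ∑ m ∈ A, f (m + j) * (starRingEnd ℂ) (f (m + k)) = D ((j:ℤ) - k) := by
    intro j k hj hk
    set q : ℤ := (j:ℤ) - k with hqdef
    have step1 : ∑ m ∈ A, f (m + j) * (starRingEnd ℂ) (f (m + k))
        = ∑ m ∈ A, f ((m + k) + q) * (starRingEnd ℂ) (f (m + k)) := by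
      apply Finset.sum_congr rfl
      intro m _
      congr 1
      rw [hqdef]; ring_nf
    rw [step1]
    have step2 : ∑ m ∈ A, f ((m + (k:ℤ)) + q) * (starRingEnd ℂ) (f (m + k))
        = ∑ n ∈ A.map (addRightEmbedding (k:ℤ)), f (n + q) * (starRingEnd ℂ) (f n) := by
      rw [Finset.sum_map]; rfl
    rw [step2, hA, Finset.map_add_right_Icc]
    have hsub : T ⊆ Finset.Icc (a - Q + 1 + k) (b + k) := by
      intro n hn
      have h1 : a ≤ n := T.min'_le n hn
      have h2 : n ≤ b := T.le_max' n hn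
      rw [Finset.mem_Icc]
      omega
    rw [← Finset.sum_subset hsub (fun x _ hx => by simp [hf, hx])]
    simp only [hD]
    rw [Finset.sum_filter]
    apply Finset.sum_congr rfl
    intro n hn
    by_cases h : n + q ∈ T <;> simp [hf, h, hn]
  have hclaim2 : ∑ m ∈ A, w m * (starRingEnd ℂ) (w m)
      = ∑ q ∈ Finset.Ioo (-(Q:ℤ)) (Q:ℤ), ((Q : ℕ) - q.natAbs) • D q := by
    have expand : ∀ m : ℤ, w m * (starRingEnd ℂ) (w m)
        = ∑ p ∈ Finset.range Q ×ˢ Finset.range Q,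
            f (m + p.1) * (starRingEnd ℂ) (f (m + p.2)) := by
      intro m
      rw [hw, map_sum, Finset.sum_mul_sum, ← Finset.sum_product']
    rw [Finset.sum_congr rfl (fun m _ => expand m), Finset.sum_comm]
    have maps : ∀ p ∈ Finset.range Q ×ˢ Finset.range Q,
        ((p.1 : ℤ) - p.2) ∈ Finset.Ioo (-(Q:ℤ)) (Q:ℤ) := by
      intro p hp
      rw [Finset.mem_product, Finset.mem_range, Finset.mem_range] at hp
      rw [Finset.mem_Ioo]
      omega
    rw [← Finset.sum_fiberwise_of_maps_to maps
      (fun p => ∑ m ∈ A, f (m + p.1) * (starRingEnd ℂ) (f (m + p.2)))]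
    apply Finset.sum_congr rfl
    intro q hq
    rw [Finset.mem_Ioo] at hq
    have hqQ : q.natAbs < Q := by omega
    have : ∀ p ∈ (Finset.range Q ×ˢ Finset.range Q).filter
        (fun p : ℕ × ℕ => (p.1 : ℤ) - p.2 = q),
        ∑ m ∈ A, f (m + p.1) * (starRingEnd ℂ) (f (m + p.2)) = D q := by
      intro p hp
      rw [Finset.mem_filter, Finset.mem_product, Finset.mem_range, Finset.mem_range] at hp
      rw [hinner2 p.1 p.2 hp.1.1 hp.1.2, hp.2]
    rw [Finset.sum_congr rfl this, Finset.sum_const, fiber_card Q q hqQ]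
  -- turn into a real quantity
  set r : ℝ := ∑ m ∈ A, ‖w m‖ ^ 2 with hr
  have hrC : ∑ m ∈ A, w m * (starRingEnd ℂ) (w m) = (r : ℂ) := by
    rw [hr, Complex.ofReal_sum]
    apply Finset.sum_congr rfl
    intro m _
    rw [Complex.mul_conj']
    push_cast
    rfl
  have hr0 : 0 ≤ r := Finset.sum_nonneg fun m _ => by positivity
  -- Cauchy–Schwarz
  have hCS : ((Q:ℝ) * ‖∑ n ∈ T, z n‖) ^ 2 ≤ (A.card : ℝ) * r := by
    have h1 : (Q:ℝ) * ‖∑ n ∈ T, z n‖ = ‖∑ m ∈ A, w m‖ := by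
      rw [hclaim1]
      simp [abs_of_nonneg]
    have h2 : ‖∑ m ∈ A, w m‖ ≤ ∑ m ∈ A, ‖w m‖ := by
      exact_mod_cast norm_sum_le A w
    have h3 : (∑ m ∈ A, ‖w m‖) ^ 2 ≤ (A.card : ℝ) * r := by
      have := Finset.sum_mul_sq_le_sq_mul_sq A (fun _ => (1:ℝ))
        (fun m => ‖w m‖)
      simpa [hr, Finset.sum_const, mul_comm] using this
    calc ((Q:ℝ) * ‖∑ n ∈ T, z n‖) ^ 2
        = ‖∑ m ∈ A, w m‖ ^ 2 := by rw [h1]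
      _ ≤ (∑ m ∈ A, ‖w m‖) ^ 2 := by
          apply pow_le_pow_left₀ (norm_nonneg _) h2
      _ ≤ (A.card : ℝ) * r := h3
  -- cardinality bound
  have hcard : (A.card : ℝ) ≤ X + Q := by
    have hXa : X < (a : ℝ) := (hI ((hmemT a).mp (T.min'_mem hne))).1
    have hb2X : (b : ℝ) ≤ 2 * X := (hI ((hmemT b).mp (T.max'_mem hne))).2
    have hc : A.card = (b - a + Q).toNat := by
      rw [hA, Int.card_Icc]; congr 1; ring
    rw [hc]
    have h0 : (((b - a + Q : ℤ).toNat : ℤ) : ℝ) = ((b - a + Q : ℤ) : ℝ) := by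
      rw [Int.toNat_of_nonneg (by omega)]
    have h2 : ((b - a + Q : ℤ) : ℝ) ≤ X + Q := by
      push_cast
      linarith
    rw [← Int.cast_natCast, h0]
    exact h2
  -- rewrite the RHS sum
  have hRHSsum : ∑ q ∈ Finset.Ioo (-(Q:ℤ)) (Q:ℤ),
      ((1 - (|q| : ℝ) / (Q : ℝ) : ℝ) : ℂ) * D q = ((r / Q : ℝ) : ℂ) := by
    have key : ∀ q ∈ Finset.Ioo (-(Q:ℤ)) (Q:ℤ),
        ((1 - (|q| : ℝ) / (Q : ℝ) : ℝ) : ℂ) * D q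
          = ((Q:ℂ))⁻¹ * ((((Q : ℕ) - q.natAbs) • D q)) := by
      intro q hq
      rw [Finset.mem_Ioo] at hq
      have hqQ : q.natAbs < Q := by omega
      rw [nsmul_eq_mul]
      have hcast : ((1 - (|q| : ℝ) / (Q : ℝ) : ℝ) : ℂ) = ((Q:ℂ))⁻¹ * ((Q - q.natAbs : ℕ) : ℂ) := by
        have h1 : |(q : ℝ)| = (q.natAbs : ℝ) := by
          rw [← Int.cast_abs, Nat.cast_natAbs]
        rw [Nat.cast_sub hqQ.le]
        push_cast [h1]
        have hQC : (Q : ℂ) ≠ 0 := by exact_mod_cast hQR.ne'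
        field_simp
      rw [hcast]
      ring
    rw [Finset.sum_congr rfl key, ← Finset.mul_sum, ← hclaim2, hrC]
    push_cast
    rw [div_eq_inv_mul]
  rw [hRHSsum]
  rw [← Complex.ofReal_mul, Complex.real_le_real]
  have hQ2pos : (0:ℝ) < (Q:ℝ)^2 := by positivity
  -- final arithmetic
  have hcardr : (A.card : ℝ) * r ≤ (X + Q) * r := by
    apply mul_le_mul_of_nonneg_right hcard hr0
  have hQ2 : (Q:ℝ)^2 * ‖∑ n ∈ T, z n‖ ^ 2 ≤ (X + Q) * r := by
    calc (Q:ℝ)^2 * ‖∑ n ∈ T, z n‖ ^ 2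
        = ((Q:ℝ) * ‖∑ n ∈ T, z n‖) ^ 2 := by ring
      _ ≤ (A.card : ℝ) * r := hCS
      _ ≤ (X + Q) * r := hcardr
  have h1 : (1 + X / Q) * (r / Q) = ((X + Q) * r) / Q^2 := by
    field_simp
    ring
  rw [h1, le_div_iff₀ hQ2pos]
  nlinarith [hQ2]
end
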